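/- arXiv:2401.02203 — 2 statements merged into one kernel-verified Lean document; each statement's English description precedes it below -/
import Mathlib

section
/- If x ~ t_d(μ, Σ, ν), ε = x − μ and δ = ε'Σ^{-1}ε, then E[(ν+δ)^{-1} ε ε'] = Σ/(ν+d). -/
open MeasureTheory Matrix Set
open scoped Kronecker

noncomputable section

instance matrixMeasureSpace {m n : ℕ} : MeasureSpace (Matrix (Fin m) (Fin n) ℝ) :=
  inferInstanceAs (MeasureSpace ((Fin m) → (Fin n) → ℝ))

/-- Column-stacking vectorization of a matrix (indexed by (column, row)). -/
def vecM {dc dr : ℕ} (A : Matrix (Fin dc) (Fin dr) ℝ) : (Fin dr × Fin dc) → ℝ :=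
  fun p => A p.2 p.1

/-- Density of the multivariate t distribution `t_d(μ, S, ν)`. -/
def mvtPdf {n : Type*} [Fintype n] [DecidableEq n] (ν : ℝ) (μ : n → ℝ)
    (S : Matrix n n ℝ) (x : n → ℝ) : ℝ :=
  S.det ^ (-(1:ℝ)/2) * Real.Gamma ((ν + Fintype.card n) / 2) /
    ((Real.pi * ν) ^ ((Fintype.card n : ℝ) / 2) * Real.Gamma (ν / 2)) *
    (1 + (x - μ) ⬝ᵥ (S⁻¹ *ᵥ (x - μ)) / ν) ^ (-(ν + Fintype.card n) / 2)

/-- Density of the multivariate normal distribution `N(μ, S)`. -/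
def mvnPdf {n : Type*} [Fintype n] [DecidableEq n] (μ : n → ℝ)
    (S : Matrix n n ℝ) (x : n → ℝ) : ℝ :=
  (2 * Real.pi) ^ (-(Fintype.card n : ℝ) / 2) * S.det ^ (-(1:ℝ)/2) *
    Real.exp (-((x - μ) ⬝ᵥ (S⁻¹ *ᵥ (x - μ))) / 2)

/-- Density of the matrix-variate t distribution `Mt_{dc,dr}(W, Sc, Sr, ν)`. -/
def matTPdf {dc dr : ℕ} (ν : ℝ) (W : Matrix (Fin dc) (Fin dr) ℝ)
    (Sc : Matrix (Fin dc) (Fin dc) ℝ) (Sr : Matrix (Fin dr) (Fin dr) ℝ)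
    (X : Matrix (Fin dc) (Fin dr) ℝ) : ℝ :=
  Sc.det ^ (-(dr : ℝ) / 2) * Sr.det ^ (-(dc : ℝ) / 2) *
    Real.Gamma ((ν + dc * dr) / 2) /
    ((Real.pi * ν) ^ ((dc * dr : ℕ) / (2:ℝ)) * Real.Gamma (ν / 2)) *
    (1 + (Sc⁻¹ * (X - W) * Sr⁻¹ * (X - W)ᵀ).trace / ν) ^ (-(ν + dc * dr) / 2)

/-- Density of the matrix-normal distribution `N_{p,q}(M, U, V)`. -/
def matNormPdf {p q : ℕ} (M : Matrix (Fin p) (Fin q) ℝ) (U : Matrix (Fin p) (Fin p) ℝ)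
    (V : Matrix (Fin q) (Fin q) ℝ) (X : Matrix (Fin p) (Fin q) ℝ) : ℝ :=
  mvnPdf (vecM M) (V ⊗ₖ U) (vecM X)

/-- Density of the Gamma(shape a, rate b) distribution (on `(0,∞)`). -/
def gammaPdf (a b x : ℝ) : ℝ :=
  if 0 < x then b ^ a / Real.Gamma a * x ^ (a - 1) * Real.exp (-(b * x)) else 0

/-- Density of the Beta(a, b) distribution. -/
def betaPdf (a b x : ℝ) : ℝ :=
  if 0 < x ∧ x < 1 then
    Real.Gamma (a + b) / (Real.Gamma a * Real.Gamma b) * x ^ (a - 1) * (1 - x) ^ (b - 1)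
  else 0

/-- Density of the F distribution with `d` and `ν` degrees of freedom. -/
def fPdf (d ν x : ℝ) : ℝ :=
  if 0 < x then
    Real.Gamma ((d + ν) / 2) / (Real.Gamma (d / 2) * Real.Gamma (ν / 2)) *
      (d / ν) ^ (d / 2) * x ^ (d / 2 - 1) * (1 + d * x / ν) ^ (-(d + ν) / 2)
  else 0



lemma real_beta_interval {a b : ℝ} (ha : 0 < a) (hb : 0 < b) :
    Complex.betaIntegral a b = ((∫ x in (0:ℝ)..1, x ^ (a-1) * (1-x) ^ (b-1) : ℝ) : ℂ) := by
  rw [Complex.betaIntegral, ← intervalIntegral.integral_ofReal]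
  apply intervalIntegral.integral_congr
  intro x hx
  rw [uIcc_of_le zero_le_one] at hx
  push_cast
  rw [Complex.ofReal_cpow hx.1, Complex.ofReal_cpow (by linarith [hx.2])]
  push_cast
  ring

lemma real_beta {a b : ℝ} (ha : 0 < a) (hb : 0 < b) :
    ∫ x in Ioo (0:ℝ) 1, x ^ (a-1) * (1-x) ^ (b-1)
      = Real.Gamma a * Real.Gamma b / Real.Gamma (a+b) := by
  have h2 := Complex.Gamma_mul_Gamma_eq_betaIntegral
    (by simpa using ha : 0 < (Complex.ofReal a).re) (by simpa using hb : 0 < (Complex.ofReal b).re)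
  rw [real_beta_interval ha hb, ← Complex.ofReal_add, Complex.Gamma_ofReal, Complex.Gamma_ofReal,
    Complex.Gamma_ofReal, ← Complex.ofReal_mul, ← Complex.ofReal_mul] at h2
  have h3 : Real.Gamma a * Real.Gamma b
      = Real.Gamma (a+b) * ∫ x in (0:ℝ)..1, x ^ (a-1) * (1-x) ^ (b-1) := by exact_mod_cast h2
  have h4 : (∫ x in Ioo (0:ℝ) 1, x ^ (a-1) * (1-x) ^ (b-1))
      = ∫ x in (0:ℝ)..1, x ^ (a-1) * (1-x) ^ (b-1) := by
    rw [intervalIntegral.integral_of_le zero_le_one, integral_Ioc_eq_integral_Ioo]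
  rw [h4, h3]
  have hG : Real.Gamma (a+b) ≠ 0 := (Real.Gamma_pos_of_pos (by linarith)).ne'
  field_simp

lemma real_beta_integrableOn {a b : ℝ} (ha : 0 < a) (hb : 0 < b) :
    IntegrableOn (fun x : ℝ => x ^ (a-1) * (1-x) ^ (b-1)) (Ioo (0:ℝ) 1) := by
  have hc := Complex.betaIntegral_convergent (by simpa using ha : 0 < (Complex.ofReal a).re)
    (by simpa using hb : 0 < (Complex.ofReal b).re)
  have hc2 : IntegrableOn (fun x : ℝ => (x:ℂ) ^ ((a:ℂ)-1) * ((1:ℂ)-(x:ℂ)) ^ ((b:ℂ)-1))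
      (Ioo (0:ℝ) 1) := by
    have := (intervalIntegrable_iff_integrableOn_Ioc_of_le zero_le_one).mp hc
    exact this.mono_set Ioo_subset_Ioc_self
  have hre := hc2.re
  apply (integrableOn_congr_fun ?_ measurableSet_Ioo).mp hre
  intro x hx
  have h1 : ((x:ℂ) ^ ((a:ℂ)-1) * ((1:ℂ)-(x:ℂ)) ^ ((b:ℂ)-1))
      = ((x ^ (a-1) * (1-x) ^ (b-1) : ℝ) : ℂ) := by
    push_cast
    rw [Complex.ofReal_cpow hx.1.le, Complex.ofReal_cpow (by linarith [hx.2])]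
    push_cast; ring
  simp [h1]

def gg (d : ℕ) (ν : ℝ) : ℝ → ℝ :=
  fun t => (ν + t)⁻¹ * (1 + t / ν) ^ (-(ν + (d:ℝ)) / 2)

lemma pointwise_radial {d : ℕ} {ν : ℝ} (hν : 0 < ν) (hd : 1 ≤ d) {r : ℝ} (hr : 0 < r) :
    |2*ν*r/(ν+r^2)^2| * ((r^2/(ν+r^2)) ^ ((d:ℝ)/2) * ((ν/(ν+r^2)) ^ (ν/2-1)))
      = (2 / ν ^ ((d:ℝ)/2)) * ((r:ℝ) ^ (d-1) * (r^2 * gg d ν (r^2))) := by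
  obtain ⟨m, rfl⟩ : ∃ m, d = m + 1 := ⟨d-1, by omega⟩
  have hP : (0:ℝ) < ν + r^2 := by positivity
  have h1 : (1:ℝ) + r^2/ν = (ν + r^2)/ν := by field_simp
  have habs : |2*ν*r/(ν+r^2)^2| = 2*ν*r/(ν+r^2)^2 := abs_of_pos (by positivity)
  have hrd : (r^2 : ℝ) ^ (((m+1:ℕ):ℝ)/2) = r ^ (m+1) := by
    rw [show (r:ℝ)^2 = r ^ ((2:ℕ):ℝ) from (Real.rpow_natCast r 2).symm,
      ← Real.rpow_mul hr.le,
      show ((2:ℕ):ℝ) * (((m+1:ℕ):ℝ)/2) = ((m+1:ℕ):ℝ) by push_cast; ring,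
      Real.rpow_natCast]
  have e1 : (r^2/(ν+r^2)) ^ (((m+1:ℕ):ℝ)/2)
      = r^(m+1) / ((ν+r^2) ^ (((m+1:ℕ):ℝ)/2)) := by
    rw [Real.div_rpow (sq_nonneg r) hP.le, hrd]
  have e2 : (ν/(ν+r^2)) ^ (ν/2-1)
      = (ν ^ (ν/2) / ν) / ((ν+r^2) ^ (ν/2) / (ν+r^2)) := by
    rw [Real.div_rpow hν.le hP.le, Real.rpow_sub hν, Real.rpow_sub hP,
      Real.rpow_one, Real.rpow_one]
  have e3 : (1 + r^2/ν) ^ (-(ν + ((m+1:ℕ):ℝ))/2)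
      = (((ν+r^2)^(ν/2) / ν^(ν/2)) * ((ν+r^2)^(((m+1:ℕ):ℝ)/2) / ν^(((m+1:ℕ):ℝ)/2)))⁻¹ := by
    rw [h1, neg_div, Real.rpow_neg (by positivity),
      show (ν+((m+1:ℕ):ℝ))/2 = ν/2 + ((m+1:ℕ):ℝ)/2 by ring,
      Real.rpow_add (by positivity), Real.div_rpow hP.le hν.le, Real.div_rpow hP.le hν.le]
  have n1 : ((ν+r^2) : ℝ) ^ (ν/2) ≠ 0 := (Real.rpow_pos_of_pos hP _).ne'
  have n2 : ((ν+r^2) : ℝ) ^ (((m+1:ℕ):ℝ)/2) ≠ 0 := (Real.rpow_pos_of_pos hP _).ne'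
  have n3 : (ν : ℝ) ^ (ν/2) ≠ 0 := (Real.rpow_pos_of_pos hν _).ne'
  have n4 : (ν : ℝ) ^ (((m+1:ℕ):ℝ)/2) ≠ 0 := (Real.rpow_pos_of_pos hν _).ne'
  simp only [gg, habs, e1, e2, e3, Nat.add_sub_cancel]
  field_simp
  ring

section phi
variable {ν : ℝ} (hν : 0 < ν)

include hν in
lemma phi_deriv {r : ℝ} (hr : r ∈ Ioi (0:ℝ)) :
    HasDerivWithinAt (fun r : ℝ => r^2/(ν+r^2)) (2*ν*r/(ν+r^2)^2) (Ioi 0) r := by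
  have hr' : (0:ℝ) < r := hr
  have hP : (0:ℝ) < ν + r^2 := by positivity
  have h := (hasDerivAt_pow 2 r).div ((hasDerivAt_const r ν).add (hasDerivAt_pow 2 r)) hP.ne'
  refine HasDerivWithinAt.congr_deriv h.hasDerivWithinAt ?_
  simp only [Pi.add_apply]
  field_simp
  ring

include hν in
lemma phi_inj : InjOn (fun r : ℝ => r^2/(ν+r^2)) (Ioi 0) := by
  intro a ha b hb hab
  simp only at hab
  have hPa : (0:ℝ) < ν + a^2 := by positivity
  have hPb : (0:ℝ) < ν + b^2 := by positivity
  have ha' : (0:ℝ) < a := ha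
  have hb' : (0:ℝ) < b := hb
  rw [div_eq_div_iff hPa.ne' hPb.ne'] at hab
  have h3 : (a - b) * (a + b) = 0 := by nlinarith
  rcases mul_eq_zero.mp h3 with h | h
  · linarith
  · linarith

include hν in
lemma phi_image : (fun r : ℝ => r^2/(ν+r^2)) '' (Ioi 0) = Ioo 0 1 := by
  ext x
  constructor
  · rintro ⟨r, hr, rfl⟩
    have hr' : (0:ℝ) < r := hr
    have hP : (0:ℝ) < ν + r^2 := by positivity
    constructor
    · positivity
    · rw [div_lt_one hP]; nlinarith
  · rintro ⟨hx0, hx1⟩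
    refine ⟨Real.sqrt (ν * x / (1-x)), ?_, ?_⟩
    · have : 0 < ν * x / (1-x) := by
        apply div_pos (by positivity) (by linarith)
      exact Real.sqrt_pos.mpr this
    · have h1x : (0:ℝ) < 1 - x := by linarith
      have hsq : Real.sqrt (ν * x / (1-x)) ^ 2 = ν * x / (1-x) :=
        Real.sq_sqrt (le_of_lt (div_pos (by positivity) h1x))
      simp only [hsq]
      rw [div_eq_iff (by positivity : (0:ℝ) < ν + ν * x / (1-x)).ne']
      field_simp
      ring
end phi

section radial
variable {d : ℕ} {ν : ℝ}

lemma pointwise_radial' (hν : 0 < ν) (hd : 1 ≤ d) {r : ℝ} (hr : r ∈ Ioi (0:ℝ)) :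
    |2*ν*r/(ν+r^2)^2| • ((r^2/(ν+r^2)) ^ ((d:ℝ)/2) * ((1 - r^2/(ν+r^2)) ^ (ν/2-1)))
      = (2 / ν ^ ((d:ℝ)/2)) * ((r:ℝ) ^ (d-1) * (r^2 * gg d ν (r^2))) := by
  have hr' : (0:ℝ) < r := hr
  have hP : (0:ℝ) < ν + r^2 := by positivity
  have h1 : 1 - r^2/(ν+r^2) = ν/(ν+r^2) := by field_simp; ring
  rw [smul_eq_mul, h1]
  exact pointwise_radial hν hd hr'

lemma radial_eq (hν : 0 < ν) (hd : 1 ≤ d) :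
    (∫ r in Ioi (0:ℝ), r ^ (d-1) * (r^2 * gg d ν (r^2)))
      = ν ^ ((d:ℝ)/2) / 2 *
        (Real.Gamma ((d:ℝ)/2+1) * Real.Gamma (ν/2) / Real.Gamma ((d:ℝ)/2+1+ν/2)) := by
  have ha : (0:ℝ) < (d:ℝ)/2 + 1 := by positivity
  have hb : (0:ℝ) < ν/2 := by positivity
  have hbeta := real_beta ha hb
  simp only [add_sub_cancel_right] at hbeta
  have hcv := integral_image_eq_integral_abs_deriv_smul measurableSet_Ioi
    (fun r hr => phi_deriv hν hr) (phi_inj hν)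
    (fun x => x ^ ((d:ℝ)/2) * (1-x) ^ (ν/2-1))
  rw [phi_image hν] at hcv
  rw [setIntegral_congr_fun measurableSet_Ioi (fun r hr => pointwise_radial' hν hd hr)] at hcv
  rw [integral_const_mul] at hcv
  have hν2 : (ν : ℝ) ^ ((d:ℝ)/2) ≠ 0 := (Real.rpow_pos_of_pos hν _).ne'
  rw [hbeta] at hcv
  field_simp at hcv ⊢
  linarith

lemma radial_integrableOn (hν : 0 < ν) (hd : 1 ≤ d) :
    IntegrableOn (fun r : ℝ => r ^ (d-1) * (r^2 * gg d ν (r^2))) (Ioi (0:ℝ)) := by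
  have ha : (0:ℝ) < (d:ℝ)/2 + 1 := by positivity
  have hb : (0:ℝ) < ν/2 := by positivity
  have hbi := real_beta_integrableOn ha hb
  simp only [add_sub_cancel_right] at hbi
  have hiff := integrableOn_image_iff_integrableOn_abs_deriv_smul measurableSet_Ioi
    (fun r hr => phi_deriv hν hr) (phi_inj hν)
    (fun x => x ^ ((d:ℝ)/2) * (1-x) ^ (ν/2-1))
  rw [phi_image hν] at hiff
  have h2 := hiff.mp hbi
  have h3 := (integrableOn_congr_fun (fun r hr => pointwise_radial' hν hd hr)
    measurableSet_Ioi).mp h2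
  have hν2 : (ν : ℝ) ^ ((d:ℝ)/2) ≠ 0 := (Real.rpow_pos_of_pos hν _).ne'
  have h4 := h3.const_mul (ν ^ ((d:ℝ)/2) / 2)
  apply (integrableOn_congr_fun ?_ measurableSet_Ioi).mp h4
  intro r _
  field_simp

lemma radial_pos (hν : 0 < ν) (hd : 1 ≤ d) :
    0 < ∫ r in Ioi (0:ℝ), r ^ (d-1) * (r^2 * gg d ν (r^2)) := by
  rw [radial_eq hν hd]
  have g1 := Real.Gamma_pos_of_pos (show (0:ℝ) < (d:ℝ)/2+1 by positivity)
  have g2 := Real.Gamma_pos_of_pos (show (0:ℝ) < ν/2 by positivity)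
  have g3 := Real.Gamma_pos_of_pos (show (0:ℝ) < (d:ℝ)/2+1+ν/2 by positivity)
  have := Real.rpow_pos_of_pos hν ((d:ℝ)/2)
  positivity

lemma cont_comp_w {α : Type*} [TopologicalSpace α] {w : α → ℝ} (hw : Continuous w)
    (h0 : ∀ a, 0 ≤ w a) (hν : 0 < ν) (u v : α → ℝ) (hu : Continuous u) (hv : Continuous v) :
    Continuous fun a => u a * v a * gg d ν (w a) := by
  unfold gg
  have h1 : Continuous fun a => (ν + w a)⁻¹ :=
    (continuous_const.add hw).inv₀ fun a => by have := h0 a; exact (by linarith : (0:ℝ) < ν + w a).ne'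
  have h2 : Continuous fun a => (1 + w a / ν) ^ (-(ν + (d:ℝ))/2) :=
    (continuous_const.add (hw.div_const ν)).rpow_const fun a => Or.inl (by have := div_nonneg (h0 a) hν.le; exact (by linarith : (0:ℝ) < 1 + w a / ν).ne')
  exact (hu.mul hv).mul (h1.mul h2)

lemma J_euclidean (hν : 0 < ν) (hd : 1 ≤ d) :
    (∫ x : EuclideanSpace ℝ (Fin d), ‖x‖^2 * gg d ν (‖x‖^2))
      = (d:ℝ) * (Real.sqrt Real.pi ^ d / Real.Gamma ((d:ℝ)/2+1)) *
          ∫ r in Ioi (0:ℝ), r^(d-1) * (r^2 * gg d ν (r^2)) := by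
  haveI : Nonempty (Fin d) := Fin.pos_iff_nonempty.mp hd
  haveI : Nontrivial (EuclideanSpace ℝ (Fin d)) := by
    refine nontrivial_of_ne (EuclideanSpace.single (⟨0, hd⟩ : Fin d) (1:ℝ)) 0 fun h => ?_
    have := congrArg (fun v => v (⟨0, hd⟩ : Fin d)) h
    simp [EuclideanSpace.single_apply] at this
  have h := integral_fun_norm_addHaar (volume : Measure (EuclideanSpace ℝ (Fin d)))
    (fun r => r^2 * gg d ν (r^2))
  rw [finrank_euclideanSpace_fin] at h
  have hball : ((volume (Metric.ball (0 : EuclideanSpace ℝ (Fin d)) 1)).toReal : ℝ)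
      = Real.sqrt Real.pi ^ d / Real.Gamma ((d:ℝ)/2+1) := by
    rw [EuclideanSpace.volume_ball]
    have hpos : (0:ℝ) ≤ Real.sqrt Real.pi ^ d / Real.Gamma ((d:ℝ) / 2 + 1) := by
      have := Real.Gamma_pos_of_pos (show (0:ℝ) < (d:ℝ)/2 + 1 by positivity)
      positivity
    simp only [Fintype.card_fin, ENNReal.ofReal_one, one_pow, one_mul]
    rw [ENNReal.toReal_ofReal hpos]
  rw [measureReal_def, hball] at h
  simp only [nsmul_eq_mul, smul_eq_mul] at h
  rw [h]
  ring

lemma J_euclidean_integrable (hν : 0 < ν) (hd : 1 ≤ d) :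
    Integrable (fun x : EuclideanSpace ℝ (Fin d) => ‖x‖^2 * gg d ν (‖x‖^2)) := by
  by_contra hI
  have h0 := integral_undef hI
  rw [J_euclidean hν hd] at h0
  have hR := radial_pos hν hd
  have hV : (0:ℝ) < Real.sqrt Real.pi ^ d / Real.Gamma ((d:ℝ)/2+1) := by
    have h1 := Real.Gamma_pos_of_pos (show (0:ℝ) < (d:ℝ)/2+1 by positivity)
    have h2 : (0:ℝ) < Real.sqrt Real.pi := Real.sqrt_pos.mpr Real.pi_pos
    positivity
  have hd' : (0:ℝ) < (d:ℝ) := by exact_mod_cast hd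
  nlinarith [mul_pos (mul_pos hd' hV) hR]

open Matrix in
lemma dot_eq_norm (x : EuclideanSpace ℝ (Fin d)) :
    ((MeasurableEquiv.toLp 2 (Fin d → ℝ)).symm x) ⬝ᵥ ((MeasurableEquiv.toLp 2 (Fin d → ℝ)).symm x)
      = ‖x‖^2 := by
  rw [EuclideanSpace.norm_eq, Real.sq_sqrt (by positivity : (0:ℝ) ≤ ∑ i, ‖x i‖^2)]
  simp [dotProduct, MeasurableEquiv.coe_toLp_symm, Real.norm_eq_abs, sq_abs, sq]

open Matrix in
lemma J_pi_eq (hν : 0 < ν) (hd : 1 ≤ d) :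
    (∫ z : Fin d → ℝ, (z ⬝ᵥ z) * gg d ν (z ⬝ᵥ z))
      = (d:ℝ) * (Real.sqrt Real.pi ^ d / Real.Gamma ((d:ℝ)/2+1)) *
          ∫ r in Ioi (0:ℝ), r^(d-1) * (r^2 * gg d ν (r^2)) := by
  have hpres := EuclideanSpace.volume_preserving_symm_measurableEquiv_toLp (Fin d)
  have h := hpres.integral_comp' (fun z : Fin d → ℝ => (z ⬝ᵥ z) * gg d ν (z ⬝ᵥ z))
  rw [← h]
  have : ∀ x : EuclideanSpace ℝ (Fin d),
      (((MeasurableEquiv.toLp 2 (Fin d → ℝ)).symm x) ⬝ᵥ ((MeasurableEquiv.toLp 2 (Fin d → ℝ)).symm x))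
        * gg d ν (((MeasurableEquiv.toLp 2 (Fin d → ℝ)).symm x) ⬝ᵥ
            ((MeasurableEquiv.toLp 2 (Fin d → ℝ)).symm x))
      = ‖x‖^2 * gg d ν (‖x‖^2) := by
    intro x; rw [dot_eq_norm]
  rw [integral_congr_ae (Filter.Eventually.of_forall this)]
  exact J_euclidean hν hd

open Matrix in
lemma J_pi_integrable (hν : 0 < ν) (hd : 1 ≤ d) :
    Integrable (fun z : Fin d → ℝ => (z ⬝ᵥ z) * gg d ν (z ⬝ᵥ z)) := by
  have hpres := EuclideanSpace.volume_preserving_symm_measurableEquiv_toLp (Fin d)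
  rw [← hpres.integrable_comp_emb (MeasurableEquiv.measurableEmbedding _)]
  have : ((fun z : Fin d → ℝ => (z ⬝ᵥ z) * gg d ν (z ⬝ᵥ z)) ∘
      ((MeasurableEquiv.toLp 2 (Fin d → ℝ)).symm))
      = fun x : EuclideanSpace ℝ (Fin d) => ‖x‖^2 * gg d ν (‖x‖^2) := by
    funext x; simp only [Function.comp]; rw [dot_eq_norm]
  rw [this]
  exact J_euclidean_integrable hν hd

open Matrix

/-- change of variables by an invertible matrix -/
lemma integral_comp_mulVec {d : ℕ} {M : Matrix (Fin d) (Fin d) ℝ} (hM : M.det ≠ 0)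
    {f : (Fin d → ℝ) → ℝ} (hf : AEStronglyMeasurable f (volume : Measure (Fin d → ℝ))) :
    ∫ x, f x = |M.det| * ∫ y, f (M *ᵥ y) := by
  have hmap := Real.map_matrix_volume_pi_eq_smul_volume_pi hM
  have hcont : Continuous (Matrix.toLin' M) := LinearMap.continuous_on_pi _
  have h1 : (∫ y, f (M *ᵥ y)) = ∫ y, f (Matrix.toLin' M y) := by
    simp only [Matrix.toLin'_apply]
  have h2 : (∫ y, f (Matrix.toLin' M y)) = ∫ x, f x ∂(Measure.map (Matrix.toLin' M) volume) := by
    rw [MeasureTheory.integral_map hcont.measurable.aemeasurable]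
    rw [hmap]
    exact hf.mono_ac Measure.smul_absolutelyContinuous
  rw [h1, h2, hmap, integral_smul_measure]
  rw [ENNReal.toReal_ofReal (abs_nonneg _)]
  rw [abs_inv, smul_eq_mul, ← mul_assoc, mul_inv_cancel₀ (by simpa using hM), one_mul]

open Matrix

lemma dot_nonneg (z : Fin d → ℝ) : 0 ≤ z ⬝ᵥ z :=
  Finset.sum_nonneg fun m _ => mul_self_nonneg _

lemma dot_cont : Continuous fun z : Fin d → ℝ => z ⬝ᵥ z := by
  simp only [dotProduct]
  exact continuous_finset_sum _ fun m _ => (continuous_apply m).mul (continuous_apply m)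

lemma gg_nonneg (hν : 0 < ν) {t : ℝ} (ht : 0 ≤ t) : 0 ≤ gg d ν t := by
  unfold gg; positivity

lemma term_cont (hν : 0 < ν) (k l : Fin d) :
    Continuous fun z : Fin d → ℝ => z k * z l * gg d ν (z ⬝ᵥ z) :=
  cont_comp_w dot_cont dot_nonneg hν _ _ (continuous_apply k) (continuous_apply l)

lemma term_integrable (hν : 0 < ν) (hd : 1 ≤ d) (k l : Fin d) :
    Integrable (fun z : Fin d → ℝ => z k * z l * gg d ν (z ⬝ᵥ z)) := by
  have hJ := (J_pi_integrable hν hd).const_mul 2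
  refine hJ.mono (term_cont hν k l).aestronglyMeasurable (Filter.Eventually.of_forall fun z => ?_)
  have hw : (0:ℝ) ≤ z ⬝ᵥ z := dot_nonneg z
  have hg : (0:ℝ) ≤ gg d ν (z ⬝ᵥ z) := gg_nonneg hν hw
  have hk : z k * z k ≤ z ⬝ᵥ z :=
    Finset.single_le_sum (f := fun m => z m * z m) (fun m _ => mul_self_nonneg _)
      (Finset.mem_univ k)
  have hl : z l * z l ≤ z ⬝ᵥ z :=
    Finset.single_le_sum (f := fun m => z m * z m) (fun m _ => mul_self_nonneg _)
      (Finset.mem_univ l)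
  have habs : |z k * z l| ≤ 2 * (z ⬝ᵥ z) := by
    rw [abs_mul]
    nlinarith [abs_nonneg (z k), abs_nonneg (z l), sq_abs (z k), sq_abs (z l),
      sq_nonneg (|z k| - |z l|)]
  rw [Real.norm_eq_abs, Real.norm_eq_abs, abs_mul]
  have h2 : |gg d ν (z ⬝ᵥ z)| = gg d ν (z ⬝ᵥ z) := abs_of_nonneg hg
  rw [h2]
  have : |2 * (z ⬝ᵥ z * gg d ν (z ⬝ᵥ z))| = 2 * (z ⬝ᵥ z * gg d ν (z ⬝ᵥ z)) := by
    rw [abs_of_nonneg]; positivity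
  rw [this]
  nlinarith [habs, hg]

lemma sym_zero (hν : 0 < ν) {k l : Fin d} (hkl : k ≠ l) :
    (∫ z : Fin d → ℝ, z k * z l * gg d ν (z ⬝ᵥ z)) = 0 := by
  classical
  set v : Fin d → ℝ := fun m => if m = k then -1 else 1 with hv
  set M : Matrix (Fin d) (Fin d) ℝ := Matrix.diagonal v with hM
  have hdet : M.det = -1 := by
    rw [hM, Matrix.det_diagonal, hv]
    simpa using Finset.prod_ite_eq' Finset.univ k (fun _ => (-1:ℝ))
  have hw : ∀ z : Fin d → ℝ, (M *ᵥ z) ⬝ᵥ (M *ᵥ z) = z ⬝ᵥ z := by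
    intro z
    apply Finset.sum_congr rfl
    intro m _
    simp only [hM, Matrix.mulVec_diagonal, hv]
    by_cases h : m = k <;> simp [h] <;> ring
  have hcomp := integral_comp_mulVec (by rw [hdet]; norm_num)
    (term_cont hν k l).aestronglyMeasurable
  rw [hdet] at hcomp
  have hpt : ∀ z : Fin d → ℝ,
      (M *ᵥ z) k * (M *ᵥ z) l * gg d ν ((M *ᵥ z) ⬝ᵥ (M *ᵥ z))
        = -(z k * z l * gg d ν (z ⬝ᵥ z)) := by
    intro z
    rw [hw]
    simp [hM, Matrix.mulVec_diagonal, hv, Ne.symm hkl]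
  rw [integral_congr_ae (Filter.Eventually.of_forall hpt), integral_neg] at hcomp
  have : |(-1 : ℝ)| = 1 := by norm_num
  rw [this] at hcomp
  linarith

lemma sym_eq (hν : 0 < ν) (k l : Fin d) :
    (∫ z : Fin d → ℝ, z k * z k * gg d ν (z ⬝ᵥ z))
      = ∫ z : Fin d → ℝ, z l * z l * gg d ν (z ⬝ᵥ z) := by
  classical
  by_cases hkl : k = l
  · rw [hkl]
  set σ := Equiv.swap k l with hσ
  set M : Matrix (Fin d) (Fin d) ℝ := σ.permMatrix ℝ with hM
  have hdet : M.det = -1 := by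
    rw [hM, Matrix.det_permutation, Equiv.Perm.sign_swap hkl]
    simp
  have hMz : ∀ z : Fin d → ℝ, M *ᵥ z = fun a => z (σ a) := by
    intro z
    funext a
    simp only [hM, Matrix.mulVec, dotProduct, PEquiv.toMatrix_apply,
      Equiv.toPEquiv_apply, Option.mem_def, Option.some.injEq]
    rw [Finset.sum_congr rfl (fun b _ => ?_), Finset.sum_ite_eq' Finset.univ (σ a) z]
    · simp
    · by_cases h : b = σ a <;> simp [h, eq_comm]
  have hw : ∀ z : Fin d → ℝ, (M *ᵥ z) ⬝ᵥ (M *ᵥ z) = z ⬝ᵥ z := by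
    intro z
    rw [hMz]
    exact Equiv.sum_comp σ (fun m => z m * z m)
  have hcomp := integral_comp_mulVec (by rw [hdet]; norm_num)
    (term_cont hν k k).aestronglyMeasurable
  rw [hdet] at hcomp
  have hpt : ∀ z : Fin d → ℝ,
      (M *ᵥ z) k * (M *ᵥ z) k * gg d ν ((M *ᵥ z) ⬝ᵥ (M *ᵥ z))
        = z l * z l * gg d ν (z ⬝ᵥ z) := by
    intro z
    rw [hw, hMz]
    simp [hσ, Equiv.swap_apply_left]
  rw [integral_congr_ae (Filter.Eventually.of_forall hpt)] at hcomp
  have : |(-1 : ℝ)| = 1 := by norm_num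
  rw [this, one_mul] at hcomp
  exact hcomp

lemma const_combine {d : ℕ} (hd : 1 ≤ d) {ν : ℝ} (hν : 0 < ν) :
    Real.Gamma ((ν + (d:ℝ))/2) / ((Real.pi * ν) ^ ((d:ℝ)/2) * Real.Gamma (ν/2)) *
      ((Real.sqrt Real.pi ^ d / Real.Gamma ((d:ℝ)/2+1)) *
        (ν ^ ((d:ℝ)/2) / 2 *
          (Real.Gamma ((d:ℝ)/2+1) * Real.Gamma (ν/2) / Real.Gamma ((d:ℝ)/2+1+ν/2))))
      = 1 / (ν + (d:ℝ)) := by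
  have hsq : Real.sqrt Real.pi ^ d = Real.pi ^ ((d:ℝ)/2) := by
    rw [Real.sqrt_eq_rpow, ← Real.rpow_natCast (Real.pi ^ ((1:ℝ)/2)) d,
      ← Real.rpow_mul Real.pi_pos.le,
      show (1:ℝ)/2 * (d:ℕ) = (d:ℝ)/2 by push_cast; ring]
  have hmul : (Real.pi * ν) ^ ((d:ℝ)/2) = Real.pi ^ ((d:ℝ)/2) * ν ^ ((d:ℝ)/2) :=
    Real.mul_rpow Real.pi_pos.le hν.le
  have hd' : (0:ℝ) < (d:ℝ) := by exact_mod_cast hd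
  have hGrec : Real.Gamma ((d:ℝ)/2+1+ν/2) = (ν + (d:ℝ))/2 * Real.Gamma ((ν+(d:ℝ))/2) := by
    rw [show (d:ℝ)/2+1+ν/2 = (ν+(d:ℝ))/2 + 1 by ring,
      Real.Gamma_add_one (by positivity : ((ν+(d:ℝ))/2) ≠ 0)]
  have p1 : (0:ℝ) < Real.Gamma ((ν+(d:ℝ))/2) := Real.Gamma_pos_of_pos (by positivity)
  have p2 : (0:ℝ) < Real.Gamma (ν/2) := Real.Gamma_pos_of_pos (by positivity)
  have p3 : (0:ℝ) < Real.Gamma ((d:ℝ)/2+1) := Real.Gamma_pos_of_pos (by positivity)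
  have p4 : (0:ℝ) < Real.pi ^ ((d:ℝ)/2) := Real.rpow_pos_of_pos Real.pi_pos _
  have p5 : (0:ℝ) < ν ^ ((d:ℝ)/2) := Real.rpow_pos_of_pos hν _
  rw [hsq, hmul, hGrec]
  field_simp


end radial

open scoped MatrixOrder

/-- if `x ~ t_d(μ, Σ, ν)`, `ε = x − μ`, `δ = ε'Σ⁻¹ε`, then
`E[(ν+δ)⁻¹ ε ε'] = Σ/(ν+d)` (entrywise). -/
theorem expect_weighted_outer_first {d : ℕ} (ν : ℝ) (hν : 0 < ν)
    (μ : Fin d → ℝ) (S : Matrix (Fin d) (Fin d) ℝ) (hS : S.PosDef) :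
    ∀ i j : Fin d,
      (∫ x : Fin d → ℝ,
          (ν + (x - μ) ⬝ᵥ (S⁻¹ *ᵥ (x - μ)))⁻¹ * ((x i - μ i) * (x j - μ j)) *
            mvtPdf ν μ S x) = S i j / (ν + d) := by
  intro i j
  rcases Nat.eq_zero_or_pos d with hd0 | hd
  · subst hd0; exact i.elim0
  classical
  set A := CFC.sqrt S with hAdef
  have hAA : A * A = S := CFC.sqrt_mul_sqrt_self S hS.posSemidef.nonneg
  have hAH : A.IsHermitian := (CFC.sqrt_nonneg S).posSemidef.isHermitian
  have hAT : Aᵀ = A := by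
    ext a b
    have h := congrFun (congrFun hAH a) b
    simpa [Matrix.conjTranspose_apply] using h
  have hdetS : 0 < S.det := hS.det_pos
  have hdet2 : A.det * A.det = S.det := by rw [← Matrix.det_mul, hAA]
  have hdetA : A.det ≠ 0 := by
    intro h; rw [h, zero_mul] at hdet2; exact hdetS.ne' hdet2.symm
  have habsdet : |A.det| * S.det ^ (-(1:ℝ)/2) = 1 := by
    have h1 : |A.det| ^ (2:ℕ) = S.det := by rw [sq_abs, sq]; exact hdet2
    have h2 : S.det ^ (-(1:ℝ)/2) = |A.det|⁻¹ := by
      rw [← h1, ← Real.rpow_natCast |A.det| 2, ← Real.rpow_mul (abs_nonneg _),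
        show ((2:ℕ):ℝ) * (-(1:ℝ)/2) = -1 by push_cast; ring, Real.rpow_neg_one]
    rw [h2, mul_inv_cancel₀ (abs_ne_zero.mpr hdetA)]
  have hSinv : S⁻¹ = A⁻¹ * A⁻¹ := by rw [← hAA, Matrix.mul_inv_rev]
  have hAinv : ∀ z : Fin d → ℝ, A⁻¹ *ᵥ (A *ᵥ z) = z := by
    intro z; rw [Matrix.mulVec_mulVec, Matrix.nonsing_inv_mul A (Ne.isUnit hdetA), Matrix.one_mulVec]
  have hkey : ∀ z : Fin d → ℝ, (A *ᵥ z) ⬝ᵥ (S⁻¹ *ᵥ (A *ᵥ z)) = z ⬝ᵥ z := by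
    intro z
    rw [hSinv, ← Matrix.mulVec_mulVec, hAinv, dotProduct_mulVec]
    have hvm : (A *ᵥ z) ᵥ* A⁻¹ = z := by
      rw [← Matrix.mulVec_transpose, Matrix.transpose_nonsing_inv, hAT]
      exact hAinv z
    rw [hvm]
  have hq_nonneg : ∀ v : Fin d → ℝ, 0 ≤ v ⬝ᵥ (S⁻¹ *ᵥ v) := by
    intro v
    have h := (hS.inv).posSemidef.dotProduct_mulVec_nonneg v
    simpa using h
  have hq_cont : Continuous fun v : Fin d → ℝ => v ⬝ᵥ (S⁻¹ *ᵥ v) := by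
    simp only [dotProduct, Matrix.mulVec]
    exact continuous_finset_sum _ fun m _ =>
      (continuous_apply m).mul (continuous_finset_sum _ fun l _ =>
        (continuous_const.mul (continuous_apply l)))
  set K := S.det ^ (-(1:ℝ)/2) * Real.Gamma ((ν + (d:ℝ))/2) /
      ((Real.pi * ν) ^ ((d:ℝ)/2) * Real.Gamma (ν/2)) with hK
  have hpt1 : ∀ x : Fin d → ℝ,
      (ν + (x - μ) ⬝ᵥ (S⁻¹ *ᵥ (x - μ)))⁻¹ * ((x i - μ i) * (x j - μ j)) * mvtPdf ν μ S x
        = K * ((x-μ) i * (x-μ) j * gg d ν ((x-μ) ⬝ᵥ (S⁻¹ *ᵥ (x-μ)))) := by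
    intro x
    simp only [mvtPdf, Fintype.card_fin, gg, hK, Pi.sub_apply]
    ring
  rw [integral_congr_ae (Filter.Eventually.of_forall hpt1), integral_const_mul]
  have htrans : (∫ x : Fin d → ℝ, (x-μ) i * (x-μ) j * gg d ν ((x-μ) ⬝ᵥ (S⁻¹ *ᵥ (x-μ))))
      = ∫ y : Fin d → ℝ, y i * y j * gg d ν (y ⬝ᵥ (S⁻¹ *ᵥ y)) :=
    integral_sub_right_eq_self (fun y : Fin d → ℝ => y i * y j * gg d ν (y ⬝ᵥ (S⁻¹ *ᵥ y))) μ
  rw [htrans]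
  have hGcont : Continuous fun v : Fin d → ℝ => v i * v j * gg d ν (v ⬝ᵥ (S⁻¹ *ᵥ v)) :=
    cont_comp_w hq_cont hq_nonneg hν _ _ (continuous_apply i) (continuous_apply j)
  rw [integral_comp_mulVec hdetA hGcont.aestronglyMeasurable]
  have hexp : ∀ z : Fin d → ℝ,
      (A *ᵥ z) i * (A *ᵥ z) j * gg d ν ((A *ᵥ z) ⬝ᵥ (S⁻¹ *ᵥ (A *ᵥ z)))
        = ∑ k, ∑ l, A i k * A j l * (z k * z l * gg d ν (z ⬝ᵥ z)) := by
    intro z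
    rw [hkey]
    have h1 : (A *ᵥ z) i = ∑ k, A i k * z k := rfl
    have h2 : (A *ᵥ z) j = ∑ l, A j l * z l := rfl
    rw [h1, h2, Finset.sum_mul_sum, Finset.sum_mul]
    refine Finset.sum_congr rfl fun k _ => ?_
    rw [Finset.sum_mul]
    exact Finset.sum_congr rfl fun l _ => by ring
  rw [integral_congr_ae (Filter.Eventually.of_forall hexp)]
  rw [integral_finset_sum _ fun k _ => integrable_finset_sum _ fun l _ =>
    ((term_integrable hν hd k l).const_mul (A i k * A j l))]
  set k0 : Fin d := ⟨0, hd⟩ with hk0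
  set c : ℝ := ∫ z : Fin d → ℝ, z k0 * z k0 * gg d ν (z ⬝ᵥ z) with hc
  have hsum : (∑ k, A i k * A j k) = S i j := by
    calc ∑ k, A i k * A j k = ∑ k, A i k * Aᵀ k j :=
          Finset.sum_congr rfl fun k _ => by rw [Matrix.transpose_apply]
      _ = (A * Aᵀ) i j := (Matrix.mul_apply).symm
      _ = S i j := by rw [hAT, hAA]
  have h8 : ∀ k : Fin d,
      (∫ z : Fin d → ℝ, ∑ l, A i k * A j l * (z k * z l * gg d ν (z ⬝ᵥ z)))
        = A i k * A j k * c := by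
    intro k
    rw [integral_finset_sum _ fun l _ => ((term_integrable hν hd k l).const_mul (A i k * A j l))]
    rw [Finset.sum_congr rfl fun l _ =>
      integral_const_mul (A i k * A j l) (fun z : Fin d → ℝ => z k * z l * gg d ν (z ⬝ᵥ z))]
    rw [Finset.sum_eq_single k]
    · rw [sym_eq hν k k0]
    · intro l _ hlk
      rw [sym_zero hν (Ne.symm hlk), mul_zero]
    · intro h; exact absurd (Finset.mem_univ k) h
  rw [Finset.sum_congr rfl fun k _ => h8 k, ← Finset.sum_mul, hsum]
  have hcsum : (d:ℝ) * c = ∫ z : Fin d → ℝ, (z ⬝ᵥ z) * gg d ν (z ⬝ᵥ z) := by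
    have h7 : (∫ z : Fin d → ℝ, (z ⬝ᵥ z) * gg d ν (z ⬝ᵥ z))
        = ∑ k : Fin d, ∫ z : Fin d → ℝ, z k * z k * gg d ν (z ⬝ᵥ z) := by
      rw [← integral_finset_sum _ fun k _ => term_integrable hν hd k k]
      refine integral_congr_ae (Filter.Eventually.of_forall fun z => ?_)
      show (z ⬝ᵥ z) * gg d ν (z ⬝ᵥ z) = ∑ m : Fin d, z m * z m * gg d ν (z ⬝ᵥ z)
      rw [← Finset.sum_mul]
      rfl
    rw [h7, Finset.sum_congr rfl fun k _ => sym_eq hν k k0, Finset.sum_const,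
      Finset.card_univ, Fintype.card_fin, nsmul_eq_mul]
  have hd' : ((d:ℝ)) ≠ 0 := by
    have : (0:ℝ) < (d:ℝ) := by exact_mod_cast hd
    exact this.ne'
  have hcval : c = (Real.sqrt Real.pi ^ d / Real.Gamma ((d:ℝ)/2+1)) *
      (ν ^ ((d:ℝ)/2) / 2 *
        (Real.Gamma ((d:ℝ)/2+1) * Real.Gamma (ν/2) / Real.Gamma ((d:ℝ)/2+1+ν/2))) := by
    have hJ := J_pi_eq hν hd
    rw [← hcsum, radial_eq hν hd] at hJ
    exact mul_left_cancel₀ hd' (by rw [hJ]; ring)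
  have hKdet : K * |A.det| = Real.Gamma ((ν + (d:ℝ))/2) /
      ((Real.pi * ν) ^ ((d:ℝ)/2) * Real.Gamma (ν/2)) := by
    calc K * |A.det|
        = (|A.det| * S.det ^ (-(1:ℝ)/2)) *
            (Real.Gamma ((ν + (d:ℝ))/2) / ((Real.pi * ν) ^ ((d:ℝ)/2) * Real.Gamma (ν/2))) := by
          rw [hK]; ring
      _ = Real.Gamma ((ν + (d:ℝ))/2) / ((Real.pi * ν) ^ ((d:ℝ)/2) * Real.Gamma (ν/2)) := by
          rw [habsdet, one_mul]
  have hcc := const_combine hd hν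
  calc K * (|A.det| * (S i j * c))
      = (K * |A.det|) * c * S i j := by ring
    _ = (Real.Gamma ((ν + (d:ℝ))/2) / ((Real.pi * ν) ^ ((d:ℝ)/2) * Real.Gamma (ν/2)) *
          ((Real.sqrt Real.pi ^ d / Real.Gamma ((d:ℝ)/2+1)) *
            (ν ^ ((d:ℝ)/2) / 2 *
              (Real.Gamma ((d:ℝ)/2+1) * Real.Gamma (ν/2) / Real.Gamma ((d:ℝ)/2+1+ν/2))))) *
          S i j := by rw [hKdet, hcval]
    _ = (1 / (ν + (d:ℝ))) * S i j := by rw [hcc]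
    _ = S i j / (ν + (d:ℝ)) := by ring

end
end

section
/- Let S be a symmetric positive semidefinite d×d matrix with eigenvalues λ_1 ≥ λ_2 ≥ ... ≥ λ_d and corresponding orthonormal eigenvectors u_1, ..., u_d. Consider maximizing f(A) = −(ln|AA' + I| + tr((AA' + I)^{-1} S)) over A ∈ R^{d × q}. If λ_q ≥ 1, then a maximizer is given by A = U_q (Λ_q − I)^{1/2}, where U_q = (u_1,...,u_q) and Λ_q = diag(λ_1,...,λ_q); more generally the maximum is attained at A = U_{q'} (Λ_{q'} − I)^{1/2} V where q' is the largest index with λ_{q'} ≥ 1 (capped at q) and V is any q' × q matrix with VV' = I. -/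
open MeasureTheory Matrix Set
open scoped Kronecker

noncomputable section

namespace TBFA

def psi (x : ℝ) : ℝ := if 1 ≤ x then x - 1 - Real.log x else 0

def gsl (x : ℝ) : ℝ := if 1 ≤ x then 1 - 1/x else 0

lemma psi_nonneg (x : ℝ) : 0 ≤ psi x := by
  unfold psi; split_ifs with h
  · have := Real.log_le_sub_one_of_pos (by linarith : (0:ℝ) < x); linarith
  · exact le_refl _

lemma psi_of_le_one {x : ℝ} (h : x ≤ 1) : psi x = 0 := by
  unfold psi; split_ifs with h'
  · have : x = 1 := le_antisymm h h'
    simp [this]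
  · rfl

lemma gsl_nonneg (x : ℝ) : 0 ≤ gsl x := by
  unfold gsl; split_ifs with h
  · have : 1/x ≤ 1 := by
      rw [div_le_one (by linarith)]; linarith
    linarith
  · exact le_refl _

lemma gsl_lt_one (x : ℝ) : gsl x < 1 := by
  unfold gsl; split_ifs with h
  · have : 0 < 1/x := by positivity
    linarith
  · norm_num

lemma gsl_mono : Monotone gsl := by
  intro a b hab
  unfold gsl; split_ifs with h1 h2
  · have ha : 0 < a := by linarith
    have hb : 0 < b := by linarith
    have : 1/b ≤ 1/a := one_div_le_one_div_of_le ha hab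
    linarith
  · exact absurd (h1.trans hab) h2
  · have hb : 0 < b := by linarith
    have : 1/b ≤ 1 := by rw [div_le_one hb]; linarith
    linarith
  · exact le_refl _

/-- subgradient inequality: `psi y ≥ psi x + gsl x * (y - x)` for `y ≥ 0`. -/
lemma psi_subgrad {x y : ℝ} (hy : 0 ≤ y) : psi x + gsl x * (y - x) ≤ psi y := by
  unfold psi gsl
  by_cases hx : 1 ≤ x
  · have hx0 : 0 < x := by linarith
    by_cases hy1 : 1 ≤ y
    · simp only [if_pos hx, if_pos hy1]
      -- need: (x-1-log x) + (1-1/x)(y-x) ≤ y-1-log y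
      -- ⇔ log x - log y + (y-x)/x ≥ ... rearrange: log y - log x ≤ (y-x)/x
      have hy0 : 0 < y := by linarith
      have key : Real.log y - Real.log x ≤ y/x - 1 := by
        have := Real.log_le_sub_one_of_pos (div_pos hy0 hx0)
        rwa [Real.log_div (ne_of_gt hy0) (ne_of_gt hx0)] at this
      have hxx : (1 - 1/x) * (y - x) = (y - x) - (y/x - 1) := by
        field_simp
      rw [hxx]; linarith
    · simp only [if_pos hx, if_neg hy1]
      -- need: (x-1-log x) + (1-1/x)(y-x) ≤ 0
      push_neg at hy1
      have h1x : 0 ≤ 1 - 1/x := by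
        have : 1/x ≤ 1 := by rw [div_le_one hx0]; linarith
        linarith
      have key : 1 - 1/x ≤ Real.log x := by
        have := Real.log_le_sub_one_of_pos (one_div_pos.mpr hx0)
        rw [Real.log_div one_ne_zero (ne_of_gt hx0), Real.log_one] at this
        linarith
      have h2 : (1 - 1/x) * (y - x) ≤ (1 - 1/x) * y - (x - 1) := by
        have : (1 - 1/x) * x = x - 1 := by field_simp
        nlinarith
      have h3 : (1 - 1/x) * y ≤ 1 - 1/x := by nlinarith
      linarith
  · simp only [if_neg hx]
    have := psi_nonneg y
    unfold psi at this
    simpa using this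

/-- key pointwise bound: for `β ≥ 0`, `t ≥ 0`:
`t - psi t ≤ log (1+β) + t/(1+β)`. -/
lemma pointwise_bound {β t : ℝ} (hβ : 0 ≤ β) (ht : 0 ≤ t) :
    t - psi t ≤ Real.log (1 + β) + t / (1 + β) := by
  have hμ : (1:ℝ) ≤ 1 + β := by linarith
  have hμ0 : (0:ℝ) < 1 + β := by linarith
  unfold psi
  split_ifs with h
  · -- t ≥ 1 : need log t + 1 ≤ log μ + t/μ  ⇔  t/μ - 1 ≥ log(t/μ)
    have ht0 : 0 < t := by linarith
    have key := Real.log_le_sub_one_of_pos (div_pos ht0 hμ0)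
    rw [Real.log_div (ne_of_gt ht0) (ne_of_gt hμ0)] at key
    linarith
  · -- t ≤ 1 : need t ≤ log μ + t/μ ⇔ t(1 - 1/μ) ≤ log μ
    push_neg at h
    have key : 1 - 1/(1+β) ≤ Real.log (1+β) := by
      have := Real.log_le_sub_one_of_pos (one_div_pos.mpr hμ0)
      rw [Real.log_div one_ne_zero (ne_of_gt hμ0), Real.log_one] at this
      linarith
    have h1 : 0 ≤ 1 - 1/(1+β) := by
      have : 1/(1+β) ≤ 1 := by rw [div_le_one hμ0]; linarith
      linarith
    have h2 : t * (1 - 1/(1+β)) ≤ 1 - 1/(1+β) := by nlinarith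
    have h3 : t - t/(1+β) = t * (1 - 1/(1+β)) := by field_simp
    linarith

/-- Abel-type induction: if `g` is antitone and nonneg on `[0,m]` and partial sums of
`dd` up to every `n ≤ m` are ≤ 0, then `∑_{k<n} g k * dd k ≤ g n * (∑_{k<n} dd k)`. -/
lemma abel_bound (g dd : ℕ → ℝ) (m : ℕ)
    (hg : ∀ k, k < m → g (k+1) ≤ g k)
    (hgn : ∀ k, k ≤ m → 0 ≤ g k)
    (hD : ∀ n, n ≤ m → (∑ k ∈ Finset.range n, dd k) ≤ 0) :
    ∀ n, n ≤ m → (∑ k ∈ Finset.range n, g k * dd k) ≤ g n * (∑ k ∈ Finset.range n, dd k) := by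
  intro n
  induction n with
  | zero => intro _; simp
  | succ n ih =>
    intro hn
    have hn' : n ≤ m := Nat.le_of_succ_le hn
    have h1 := ih hn'
    rw [Finset.sum_range_succ, Finset.sum_range_succ]
    have h2 : g n * (∑ k ∈ Finset.range n, dd k) + g n * dd n
        = g n * (∑ k ∈ Finset.range n, dd k + dd n) := by ring
    have hDn : (∑ k ∈ Finset.range n, dd k) + dd n ≤ 0 := by
      have := hD (n+1) hn
      rwa [Finset.sum_range_succ] at this
    have h3 : g n * ((∑ k ∈ Finset.range n, dd k) + dd n) ≤
        g (n+1) * ((∑ k ∈ Finset.range n, dd k) + dd n) :=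
      mul_le_mul_of_nonpos_right (hg n (by omega)) hDn
    calc (∑ k ∈ Finset.range n, g k * dd k) + g n * dd n
        ≤ g n * (∑ k ∈ Finset.range n, dd k) + g n * dd n := by linarith
      _ = g n * ((∑ k ∈ Finset.range n, dd k) + dd n) := by ring
      _ ≤ g (n+1) * ((∑ k ∈ Finset.range n, dd k) + dd n) := h3
      _ = g (n+1) * (∑ k ∈ Finset.range n, dd k + dd n) := rfl



/-- Tomić-type majorization inequality for `psi`. -/
lemma tomic (d : ℕ) (s lamt : ℕ → ℝ)
    (hs_anti : ∀ k, k + 1 < d → s (k+1) ≤ s k)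
    (hl0 : ∀ k, k < d → 0 ≤ lamt k)
    (hsum : ∀ n, n ≤ d → (∑ k ∈ Finset.range n, s k) ≤ ∑ k ∈ Finset.range n, lamt k) :
    (∑ k ∈ Finset.range d, psi (s k)) ≤ ∑ k ∈ Finset.range d, psi (lamt k) := by
  set g : ℕ → ℝ := fun k => if k < d then gsl (s k) else 0 with hg_def
  set dd : ℕ → ℝ := fun k => s k - lamt k with hdd_def
  have hg : ∀ k, k < d → g (k+1) ≤ g k := by
    intro k hk
    simp only [hg_def, if_pos hk]
    by_cases h : k + 1 < d
    · rw [if_pos h]; exact gsl_mono (hs_anti k h)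
    · rw [if_neg h]; exact gsl_nonneg _
  have hgn : ∀ k, k ≤ d → 0 ≤ g k := by
    intro k _
    simp only [hg_def]; split_ifs
    · exact gsl_nonneg _
    · exact le_refl _
  have hD : ∀ n, n ≤ d → (∑ k ∈ Finset.range n, dd k) ≤ 0 := by
    intro n hn
    have := hsum n hn
    simp only [hdd_def, Finset.sum_sub_distrib]
    linarith
  have habel := abel_bound g dd d hg hgn hD d (le_refl d)
  have hgd : g d = 0 := by simp [hg_def]
  rw [hgd, zero_mul] at habel
  have hterm : ∀ k ∈ Finset.range d, psi (s k) - psi (lamt k) ≤ g k * dd k := by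
    intro k hk
    rw [Finset.mem_range] at hk
    simp only [hg_def, hdd_def, if_pos hk]
    have := psi_subgrad (x := s k) (y := lamt k) (hl0 k hk)
    linarith
  have := Finset.sum_le_sum hterm
  rw [Finset.sum_sub_distrib] at this
  linarith

/-- rearrangement bound: if `0 ≤ c ≤ 1`, `∑ c = n`, `lam` antitone nonneg on `Fin d`,
then `∑ lam j * c j ≤ ∑_{j < n} lam j`. -/
lemma rearrange {d : ℕ} (lam : Fin d → ℝ) (c : Fin d → ℝ) (n : ℕ) (hnd : n ≤ d)
    (hmono : ∀ i j : Fin d, i ≤ j → lam j ≤ lam i)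
    (hl0 : ∀ j, 0 ≤ lam j)
    (hc0 : ∀ j, 0 ≤ c j) (hc1 : ∀ j, c j ≤ 1)
    (hsum : (∑ j, c j) = n) :
    (∑ j, lam j * c j) ≤ ∑ j ∈ Finset.univ.filter (fun j : Fin d => (j:ℕ) < n), lam j := by
  classical
  set p : ℝ := if h : n < d then lam ⟨n, h⟩ else 0 with hp_def
  have hp0 : 0 ≤ p := by
    simp only [hp_def]; split_ifs
    · exact hl0 _
    · exact le_refl _
  have hp_le : ∀ j : Fin d, (j:ℕ) < n → p ≤ lam j := by
    intro j hj
    simp only [hp_def]; split_ifs with h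
    · exact hmono j ⟨n, h⟩ (by simpa [Fin.le_def] using le_of_lt hj)
    · exact hl0 j
  have hp_ge : ∀ j : Fin d, n ≤ (j:ℕ) → lam j ≤ p := by
    intro j hj
    have h : n < d := lt_of_le_of_lt hj j.isLt
    simp only [hp_def, dif_pos h]
    exact hmono ⟨n, h⟩ j (by simpa [Fin.le_def] using hj)
  set A : Finset (Fin d) := Finset.univ.filter (fun j : Fin d => (j:ℕ) < n) with hA
  have hcardA : A.card = n := by
    simp only [hA]
    rw [← Finset.card_range n]
    refine Finset.card_bij' (fun (j : Fin d) _ => (j:ℕ))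
      (fun k hk => (⟨k, lt_of_lt_of_le (Finset.mem_range.mp hk) hnd⟩ : Fin d))
      ?_ ?_ ?_ ?_
    · intro a ha; simpa using (Finset.mem_filter.mp ha).2
    · intro a ha; simp [Finset.mem_range.mp ha]
    · intro a ha; rfl
    · intro a ha; rfl
  have key1 : (∑ j ∈ A, lam j * c j) ≤ (∑ j ∈ A, lam j) + ∑ j ∈ A, p * (c j - 1) := by
    rw [← Finset.sum_add_distrib]
    apply Finset.sum_le_sum
    intro j hj
    have hjn : (j:ℕ) < n := by simpa [hA] using (Finset.mem_filter.mp hj).2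
    have h1 := hp_le j hjn
    have h2 := hc1 j
    nlinarith
  have key2 : (∑ j ∈ Aᶜ, lam j * c j) ≤ ∑ j ∈ Aᶜ, p * c j := by
    apply Finset.sum_le_sum
    intro j hj
    have hjn : n ≤ (j:ℕ) := by
      have := Finset.mem_compl.mp hj
      simp [hA] at this
      omega
    have := hp_ge j hjn
    nlinarith [hc0 j]
  have hsplit : (∑ j, lam j * c j) = (∑ j ∈ A, lam j * c j) + ∑ j ∈ Aᶜ, lam j * c j :=
    (Finset.sum_add_sum_compl A _).symm
  have hcsplit : (∑ j ∈ A, c j) + (∑ j ∈ Aᶜ, c j) = (n:ℝ) := by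
    rw [Finset.sum_add_sum_compl A c]; exact hsum
  have hfinal : (∑ j ∈ A, p * (c j - 1)) + (∑ j ∈ Aᶜ, p * c j) = 0 := by
    rw [← Finset.mul_sum, ← Finset.mul_sum, Finset.sum_sub_distrib]
    rw [Finset.sum_const, nsmul_eq_mul, hcardA]
    have : (∑ j ∈ A, c j) - (n:ℝ) * 1 + (∑ j ∈ Aᶜ, c j) = 0 := by
      rw [mul_one]; linarith
    nlinarith [this]
  calc (∑ j, lam j * c j) = (∑ j ∈ A, lam j * c j) + ∑ j ∈ Aᶜ, lam j * c j := hsplit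
    _ ≤ ((∑ j ∈ A, lam j) + ∑ j ∈ A, p * (c j - 1)) + ∑ j ∈ Aᶜ, p * c j := by linarith
    _ = (∑ j ∈ A, lam j) + ((∑ j ∈ A, p * (c j - 1)) + ∑ j ∈ Aᶜ, p * c j) := by ring
    _ = ∑ j ∈ A, lam j := by rw [hfinal]; ring


lemma sum_fin_filter_eq_range {d n : ℕ} (hnd : n ≤ d) (f : ℕ → ℝ) :
    (∑ j ∈ Finset.univ.filter (fun j : Fin d => (j:ℕ) < n), f (j:ℕ))
      = ∑ k ∈ Finset.range n, f k := by
  refine Finset.sum_bij' (fun (j : Fin d) _ => (j:ℕ))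
    (fun k hk => (⟨k, lt_of_lt_of_le (Finset.mem_range.mp hk) hnd⟩ : Fin d)) ?_ ?_ ?_ ?_ ?_
  · intro a ha; simpa using (Finset.mem_filter.mp ha).2
  · intro a ha; simp [Finset.mem_range.mp ha]
  · intro a ha; rfl
  · intro a ha; rfl
  · intro a ha; rfl

lemma psi_zero : psi 0 = 0 := by unfold psi; norm_num

/-- main combinatorial inequality -/
lemma sum_psi_le {d : ℕ} (lam t : Fin d → ℝ) (m : ℕ) (hmd : m ≤ d)
    (hl0 : ∀ j, 0 ≤ lam j) (ht0 : ∀ i, 0 ≤ t i)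
    (hsupp : (Finset.univ.filter (fun i => t i ≠ 0)).card ≤ m)
    (kyfan : ∀ I : Finset (Fin d), (∑ i ∈ I, t i) ≤
      ∑ j ∈ Finset.univ.filter (fun j : Fin d => (j:ℕ) < I.card), lam j) :
    (∑ i, psi (t i)) ≤ ∑ j ∈ Finset.univ.filter (fun j : Fin d => (j:ℕ) < m), psi (lam j) := by
  classical
  set σ : Equiv.Perm (Fin d) := Tuple.sort (fun i => -t i) with hσ
  have hsort : Monotone ((fun i => -t i) ∘ σ) := Tuple.monotone_sort (fun i => -t i)
  set s : ℕ → ℝ := fun k => if h : k < d then t (σ ⟨k, h⟩) else 0 with hs_def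
  set lamt : ℕ → ℝ := fun k => if h : k < d then (if k < m then lam ⟨k, h⟩ else 0) else 0
    with hlamt_def
  have hs_eval : ∀ (k : Fin d), s (k : ℕ) = t (σ k) := by
    intro k; simp only [hs_def, dif_pos k.isLt, Fin.eta]
  have hs_anti : ∀ k, k + 1 < d → s (k+1) ≤ s k := by
    intro k hk
    have hk' : k < d := Nat.lt_of_succ_lt hk
    simp only [hs_def, dif_pos hk, dif_pos hk']
    have := hsort (a := ⟨k, hk'⟩) (b := ⟨k+1, hk⟩) (by simp [Fin.le_def])
    simpa using this
  have hs_nonneg : ∀ k, 0 ≤ s k := by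
    intro k; simp only [hs_def]; split_ifs
    · exact ht0 _
    · exact le_refl _
  have hlamt0 : ∀ k, k < d → 0 ≤ lamt k := by
    intro k hk; simp only [hlamt_def, dif_pos hk]; split_ifs
    · exact hl0 _
    · exact le_refl _
  -- zero beyond support size
  have hs_zero : ∀ k, m ≤ k → s k = 0 := by
    intro k0 hk0
    by_contra hne
    have hk0d : k0 < d := by
      by_contra h
      exact hne (by simp [hs_def, h])
    have hpos : 0 < s k0 := lt_of_le_of_ne (hs_nonneg k0) (Ne.symm hne)
    set J : Finset (Fin d) :=
      (Finset.univ.filter (fun j : Fin d => (j:ℕ) ≤ k0)).image σ with hJ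
    have hJcard : J.card = k0 + 1 := by
      rw [hJ, Finset.card_image_of_injective _ σ.injective]
      rw [← Finset.card_range (k0+1)]
      refine Finset.card_bij' (fun (j : Fin d) _ => (j:ℕ))
        (fun k hk => (⟨k, lt_of_le_of_lt (Nat.lt_succ_iff.mp (Finset.mem_range.mp hk))
          hk0d⟩ : Fin d)) ?_ ?_ ?_ ?_
      · intro a ha
        have := (Finset.mem_filter.mp ha).2
        simp [Finset.mem_range]; omega
      · intro a ha
        simp only [Finset.mem_filter, Finset.mem_univ, true_and]
        exact Nat.lt_succ_iff.mp (Finset.mem_range.mp ha)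
      · intro a ha; rfl
      · intro a ha; rfl
    have hJsub : J ⊆ Finset.univ.filter (fun i => t i ≠ 0) := by
      intro i hi
      rw [hJ, Finset.mem_image] at hi
      obtain ⟨j, hj, rfl⟩ := hi
      have hjk : (j:ℕ) ≤ k0 := by simpa using (Finset.mem_filter.mp hj).2
      have : s k0 ≤ t (σ j) := by
        have := hsort (a := j) (b := ⟨k0, hk0d⟩) (by simp [Fin.le_def, hjk])
        simp only [Function.comp_apply, neg_le_neg_iff] at this
        calc s k0 = t (σ ⟨k0, hk0d⟩) := by simp [hs_def, dif_pos hk0d]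
          _ ≤ t (σ j) := this
      have : 0 < t (σ j) := lt_of_lt_of_le hpos this
      simp [ne_of_gt this]
    have := (Finset.card_le_card hJsub).trans hsupp
    omega
  -- partial sums
  have hsum : ∀ n, n ≤ d → (∑ k ∈ Finset.range n, s k) ≤ ∑ k ∈ Finset.range n, lamt k := by
    have hcase : ∀ n, n ≤ m → n ≤ d → (∑ k ∈ Finset.range n, s k) ≤
        ∑ k ∈ Finset.range n, lamt k := by
      intro n hnm hnd
      set I : Finset (Fin d) :=
        (Finset.univ.filter (fun j : Fin d => (j:ℕ) < n)).image σ with hI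
      have hIcard : I.card = n := by
        rw [hI, Finset.card_image_of_injective _ σ.injective]
        rw [← Finset.card_range n]
        refine Finset.card_bij' (fun (j : Fin d) _ => (j:ℕ))
          (fun k hk => (⟨k, lt_of_lt_of_le (Finset.mem_range.mp hk) hnd⟩ : Fin d)) ?_ ?_ ?_ ?_
        · intro a ha; simpa using (Finset.mem_filter.mp ha).2
        · intro a ha; simp [Finset.mem_range.mp ha]
        · intro a ha; rfl
        · intro a ha; rfl
      have hIsum : (∑ i ∈ I, t i) = ∑ k ∈ Finset.range n, s k := by
        rw [hI, Finset.sum_image (fun a _ b _ h => σ.injective h)]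
        rw [← sum_fin_filter_eq_range hnd s]
        exact Finset.sum_congr rfl (fun j _ => (hs_eval j).symm)
      have hlam : (∑ j ∈ Finset.univ.filter (fun j : Fin d => (j:ℕ) < n), lam j)
          = ∑ k ∈ Finset.range n, lamt k := by
        rw [← sum_fin_filter_eq_range hnd lamt]
        refine Finset.sum_congr rfl ?_
        intro j hj
        have hjn : (j:ℕ) < n := by simpa using (Finset.mem_filter.mp hj).2
        simp only [hlamt_def, dif_pos j.isLt, if_pos (lt_of_lt_of_le hjn hnm), Fin.eta]
      have := kyfan I
      rw [hIcard, hIsum, hlam] at this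
      exact this
    intro n hnd
    by_cases hnm : n ≤ m
    · exact hcase n hnm hnd
    · push_neg at hnm
      have h1 : (∑ k ∈ Finset.range n, s k) = ∑ k ∈ Finset.range m, s k := by
        rw [← Finset.sum_range_add_sum_Ico s (le_of_lt hnm)]
        have : (∑ k ∈ Finset.Ico m n, s k) = 0 :=
          Finset.sum_eq_zero (fun k hk => hs_zero k (Finset.mem_Ico.mp hk).1)
        rw [this, add_zero]
      have h2 : (∑ k ∈ Finset.range m, lamt k) ≤ ∑ k ∈ Finset.range n, lamt k := by
        rw [← Finset.sum_range_add_sum_Ico lamt (le_of_lt hnm)]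
        have : 0 ≤ ∑ k ∈ Finset.Ico m n, lamt k := by
          apply Finset.sum_nonneg
          intro k hk
          simp only [hlamt_def]
          split_ifs
          · exact hl0 _
          · exact le_refl _
          · exact le_refl _
        linarith
      have := hcase m (le_refl m) hmd
      rw [h1]; linarith
  -- apply tomic
  have htom := tomic d s lamt hs_anti hlamt0 hsum
  have hLHS : (∑ k ∈ Finset.range d, psi (s k)) = ∑ i, psi (t i) := by
    rw [← Fin.sum_univ_eq_sum_range (fun k => psi (s k)) d]
    rw [show (∑ k : Fin d, psi (s (k:ℕ))) = ∑ k : Fin d, psi (t (σ k)) from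
      Finset.sum_congr rfl (fun k _ => by rw [hs_eval k])]
    exact Equiv.sum_comp σ (fun i => psi (t i))
  have hRHS : (∑ k ∈ Finset.range d, psi (lamt k)) =
      ∑ j ∈ Finset.univ.filter (fun j : Fin d => (j:ℕ) < m), psi (lam j) := by
    rw [← Fin.sum_univ_eq_sum_range (fun k => psi (lamt k)) d]
    rw [← Finset.sum_filter_add_sum_filter_not Finset.univ
      (fun j : Fin d => (j:ℕ) < m) (fun j : Fin d => psi (lamt (j:ℕ)))]
    have e1 : (∑ j ∈ Finset.univ.filter (fun j : Fin d => (j:ℕ) < m),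
        psi (lamt (j:ℕ))) = ∑ j ∈ Finset.univ.filter (fun j : Fin d => (j:ℕ) < m),
        psi (lam j) := by
      refine Finset.sum_congr rfl ?_
      intro j hj
      have hjm : (j:ℕ) < m := by simpa using (Finset.mem_filter.mp hj).2
      simp [hlamt_def, dif_pos j.isLt, if_pos hjm]
    have e2 : (∑ j ∈ Finset.univ.filter (fun j : Fin d => ¬ (j:ℕ) < m),
        psi (lamt (j:ℕ))) = 0 := by
      apply Finset.sum_eq_zero
      intro j hj
      have hjm : ¬ (j:ℕ) < m := by simpa using (Finset.mem_filter.mp hj).2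
      simp [hlamt_def, dif_pos j.isLt, if_neg hjm, psi_zero]
    rw [e1, e2, add_zero]
  rw [← hLHS, ← hRHS]
  exact htom

open Matrix


variable {d : ℕ} {U : Matrix (Fin d) (Fin d) ℝ}

lemma conj_trace (hU' : Uᵀ * U = 1) (X : Matrix (Fin d) (Fin d) ℝ) :
    (U * X * Uᵀ).trace = X.trace := by
  rw [Matrix.trace_mul_cycle, hU', Matrix.one_mul]

lemma conj_mul (hU' : Uᵀ * U = 1) (X Y : Matrix (Fin d) (Fin d) ℝ) :
    (U * X * Uᵀ) * (U * Y * Uᵀ) = U * (X * Y) * Uᵀ := by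
  calc (U * X * Uᵀ) * (U * Y * Uᵀ) = U * X * (Uᵀ * U) * Y * Uᵀ := by
        simp only [Matrix.mul_assoc]
    _ = U * (X * Y) * Uᵀ := by rw [hU']; simp only [Matrix.mul_assoc, Matrix.one_mul]

lemma conj_det (hU : U * Uᵀ = 1) (X : Matrix (Fin d) (Fin d) ℝ) :
    (U * X * Uᵀ).det = X.det := by
  have h1 : U.det * Uᵀ.det = 1 := by
    rw [← Matrix.det_mul, hU, Matrix.det_one]
  rw [Matrix.det_mul, Matrix.det_mul, mul_comm U.det X.det, mul_assoc, h1, mul_one]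

lemma conj_add_one (hU : U * Uᵀ = 1) (a : Fin d → ℝ) :
    U * diagonal a * Uᵀ + 1 = U * diagonal (fun i => a i + 1) * Uᵀ := by
  have : diagonal (fun i => a i + 1) = diagonal a + 1 := by
    rw [← Matrix.diagonal_one, Matrix.diagonal_add]
  rw [this, Matrix.mul_add, Matrix.add_mul, Matrix.mul_one, hU]

lemma conj_inv (hU : U * Uᵀ = 1) (hU' : Uᵀ * U = 1) (a : Fin d → ℝ) (ha : ∀ i, a i ≠ 0) :
    (U * diagonal a * Uᵀ)⁻¹ = U * diagonal (fun i => (a i)⁻¹) * Uᵀ := by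
  apply Matrix.inv_eq_right_inv
  rw [conj_mul hU', Matrix.diagonal_mul_diagonal]
  have : (fun i => a i * (a i)⁻¹) = fun _ => (1:ℝ) := by
    funext i; exact mul_inv_cancel₀ (ha i)
  rw [this, Matrix.diagonal_one, Matrix.mul_one, hU]

example (hU : U * Uᵀ = 1) : Uᵀ * U = 1 := mul_eq_one_comm.mp hU

lemma diag_entry_mul (v : Fin d → ℝ) (X : Matrix (Fin d) (Fin d) ℝ) :
    (diagonal v * X).trace = ∑ i, v i * X i i := by
  rw [Matrix.trace]
  congr 1
  funext i
  simp [Matrix.diag, Matrix.diagonal_mul]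


lemma kyfan {d : ℕ} (S U W : Matrix (Fin d) (Fin d) ℝ) (lam : Fin d → ℝ)
    (hU : U * Uᵀ = 1) (hW : W * Wᵀ = 1)
    (hdecomp : S = U * diagonal lam * Uᵀ)
    (hmono : ∀ i j : Fin d, i ≤ j → lam j ≤ lam i)
    (hl0 : ∀ j, 0 ≤ lam j)
    (I : Finset (Fin d)) :
    (∑ i ∈ I, (Wᵀ * S * W) i i) ≤
      ∑ j ∈ Finset.univ.filter (fun j : Fin d => (j:ℕ) < I.card), lam j := by
  classical
  have hU' : Uᵀ * U = 1 := mul_eq_one_comm.mp hU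
  have hW' : Wᵀ * W = 1 := mul_eq_one_comm.mp hW
  set G : Matrix (Fin d) (Fin d) ℝ := Uᵀ * W with hG
  have hGGt : G * Gᵀ = 1 := by
    rw [hG, Matrix.transpose_mul, Matrix.transpose_transpose]
    calc Uᵀ * W * (Wᵀ * U) = Uᵀ * (W * Wᵀ) * U := by simp only [Matrix.mul_assoc]
      _ = 1 := by rw [hW, Matrix.mul_one, hU']
  have hGtG : Gᵀ * G = 1 := mul_eq_one_comm.mp hGGt
  have hconj : Wᵀ * S * W = Gᵀ * (diagonal lam * G) := by
    rw [hdecomp, hG, Matrix.transpose_mul, Matrix.transpose_transpose]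
    simp only [Matrix.mul_assoc]
  have hentry : ∀ i, (Wᵀ * S * W) i i = ∑ a, lam a * (G a i)^2 := by
    intro i
    rw [hconj, Matrix.mul_apply]
    refine Finset.sum_congr rfl ?_
    intro a _
    rw [Matrix.transpose_apply, Matrix.diagonal_mul]
    ring
  set c : Fin d → ℝ := fun a => ∑ i ∈ I, (G a i)^2 with hc
  have hswap : (∑ i ∈ I, (Wᵀ * S * W) i i) = ∑ a, lam a * c a := by
    simp only [hentry, hc]
    rw [Finset.sum_comm]
    refine Finset.sum_congr rfl ?_
    intro a _
    rw [Finset.mul_sum]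
  have hc0 : ∀ a, 0 ≤ c a := fun a => Finset.sum_nonneg (fun i _ => sq_nonneg _)
  have hc1 : ∀ a, c a ≤ 1 := by
    intro a
    have h1 : c a ≤ ∑ i, (G a i)^2 := by
      apply Finset.sum_le_sum_of_subset_of_nonneg (Finset.subset_univ I)
      intro i _ _; exact sq_nonneg _
    have h2 : (∑ i, (G a i)^2) = (G * Gᵀ) a a := by
      rw [Matrix.mul_apply]
      refine Finset.sum_congr rfl (fun i _ => ?_)
      rw [Matrix.transpose_apply]; ring
    rw [h2, hGGt] at h1
    simpa using h1
  have hcsum : (∑ a, c a) = (I.card : ℝ) := by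
    simp only [hc]
    rw [Finset.sum_comm]
    have : ∀ i ∈ I, (∑ a, (G a i)^2) = 1 := by
      intro i _
      have h2 : (∑ a, (G a i)^2) = (Gᵀ * G) i i := by
        rw [Matrix.mul_apply]
        refine Finset.sum_congr rfl (fun a _ => ?_)
        rw [Matrix.transpose_apply]; ring
      rw [h2, hGtG]
      simp
    rw [Finset.sum_congr rfl this]
    simp
  rw [hswap]
  exact rearrange lam c I.card (by
      simpa using Finset.card_le_card (Finset.subset_univ I))
    hmono hl0 hc0 hc1 hcsum

lemma psd_diag_nonneg {d : ℕ} {X : Matrix (Fin d) (Fin d) ℝ} (hX : X.PosSemidef)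
    (i : Fin d) : 0 ≤ X i i := by
  exact hX.diag_nonneg

lemma lam_nonneg {d : ℕ} {S U : Matrix (Fin d) (Fin d) ℝ} {lam : Fin d → ℝ}
    (hS : S.PosSemidef) (hU : U * Uᵀ = 1)
    (hdecomp : S = U * diagonal lam * Uᵀ) : ∀ j, 0 ≤ lam j := by
  have hU' : Uᵀ * U = 1 := mul_eq_one_comm.mp hU
  have hdiag : diagonal lam = Uᵀ * S * U := by
    rw [hdecomp]
    calc diagonal lam = (Uᵀ * U) * diagonal lam * (Uᵀ * U) := by
          rw [hU', Matrix.one_mul, Matrix.mul_one]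
      _ = Uᵀ * (U * diagonal lam * Uᵀ) * U := by simp only [Matrix.mul_assoc]
  have hpsd : (diagonal lam).PosSemidef := by
    rw [hdiag]
    have := hS.conjTranspose_mul_mul_same (B := U)
    simpa using this
  exact Matrix.posSemidef_diagonal_iff.mp hpsd

/-- general lower bound for the objective -/
lemma lower_bound {d q : ℕ} (S U : Matrix (Fin d) (Fin d) ℝ) (lam : Fin d → ℝ)
    (hS : S.PosSemidef) (hU : U * Uᵀ = 1)
    (hdecomp : S = U * diagonal lam * Uᵀ)
    (hmono : ∀ i j : Fin d, i ≤ j → lam j ≤ lam i)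
    (A : Matrix (Fin d) (Fin q) ℝ) :
    (∑ j, lam j) -
      (∑ j ∈ Finset.univ.filter (fun j : Fin d => (j:ℕ) < min q d), psi (lam j))
      ≤ Real.log (A * Aᵀ + 1).det + ((A * Aᵀ + 1)⁻¹ * S).trace := by
  classical
  have hU' : Uᵀ * U = 1 := mul_eq_one_comm.mp hU
  have hl0 : ∀ j, 0 ≤ lam j := lam_nonneg hS hU hdecomp
  have hB : (A * Aᵀ).IsHermitian := by
    simpa using isHermitian_mul_conjTranspose_self A
  have hBpsd : (A * Aᵀ).PosSemidef := by
    simpa using posSemidef_self_mul_conjTranspose A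
  set β : Fin d → ℝ := hB.eigenvalues with hβ
  have hβ0 : ∀ i, 0 ≤ β i := fun i => hBpsd.eigenvalues_nonneg i
  set W : Matrix (Fin d) (Fin d) ℝ := (hB.eigenvectorUnitary : Matrix (Fin d) (Fin d) ℝ)
    with hWdef
  have hW : W * Wᵀ = 1 := by
    have h := (Matrix.mem_unitaryGroup_iff).mp hB.eigenvectorUnitary.2
    rw [Matrix.star_eq_conjTranspose, Matrix.conjTranspose_eq_transpose_of_trivial] at h
    exact h
  have hW' : Wᵀ * W = 1 := mul_eq_one_comm.mp hW
  have hspec : A * Aᵀ = W * diagonal β * Wᵀ := by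
    have := hB.spectral_theorem
    simpa [hWdef, hβ, Matrix.star_eq_conjTranspose] using this
  -- support bound
  have hsupp : (Finset.univ.filter (fun i => β i ≠ 0)).card ≤ min q d := by
    have h1 : (A * Aᵀ).rank = Fintype.card {i // β i ≠ 0} :=
      hB.rank_eq_card_non_zero_eigs
    have h2 : Fintype.card {i // β i ≠ 0} =
        (Finset.univ.filter (fun i => β i ≠ 0)).card := Fintype.card_subtype _
    have h3 : (A * Aᵀ).rank ≤ q := by
      have := Matrix.rank_mul_le_left A Aᵀ
      have h4 := Matrix.rank_le_card_width A
      simp only [Fintype.card_fin] at h4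
      omega
    have h5 : (Finset.univ.filter (fun i => β i ≠ 0)).card ≤ d := by
      simpa using Finset.card_le_card
        (Finset.subset_univ (Finset.univ.filter (fun i => β i ≠ 0)))
    omega
  have hν : ∀ i, β i + 1 ≠ 0 := fun i => by have := hβ0 i; positivity
  have hM : A * Aᵀ + 1 = W * diagonal (fun i => β i + 1) * Wᵀ := by
    rw [hspec, conj_add_one hW]
  have hdet : (A * Aᵀ + 1).det = ∏ i, (β i + 1) := by
    rw [hM, conj_det hW, Matrix.det_diagonal]
  have hlogdet : Real.log (A * Aᵀ + 1).det = ∑ i, Real.log (β i + 1) := by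
    rw [hdet, Real.log_prod (fun i _ => hν i)]
  have hinv : (A * Aᵀ + 1)⁻¹ = W * diagonal (fun i => (β i + 1)⁻¹) * Wᵀ := by
    rw [hM, conj_inv hW hW' _ hν]
  set t : Fin d → ℝ := fun i => (Wᵀ * S * W) i i with ht
  have htr : ((A * Aᵀ + 1)⁻¹ * S).trace = ∑ i, (β i + 1)⁻¹ * t i := by
    rw [hinv]
    have e1 : W * diagonal (fun i => (β i + 1)⁻¹) * Wᵀ * S
        = W * (diagonal (fun i => (β i + 1)⁻¹) * (Wᵀ * S)) := by
      simp only [Matrix.mul_assoc]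
    rw [e1, Matrix.trace_mul_comm]
    have e2 : diagonal (fun i => (β i + 1)⁻¹) * (Wᵀ * S) * W
        = diagonal (fun i => (β i + 1)⁻¹) * (Wᵀ * S * W) := by
      simp only [Matrix.mul_assoc]
    rw [e2, diag_entry_mul]
  have ht0 : ∀ i, 0 ≤ t i := by
    intro i
    have hpsd : (Wᵀ * S * W).PosSemidef := by
      have := hS.conjTranspose_mul_mul_same (B := W)
      simpa using this
    exact psd_diag_nonneg hpsd i
  have htsum : (∑ i, t i) = ∑ j, lam j := by
    have e1 : (∑ i, t i) = (Wᵀ * S * W).trace := by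
      simp only [ht, Matrix.trace]; rfl
    have e2 : (Wᵀ * S * W).trace = S.trace := by
      rw [Matrix.trace_mul_cycle, hW, Matrix.one_mul]
    have e3 : S.trace = ∑ j, lam j := by
      rw [hdecomp, conj_trace hU', Matrix.trace_diagonal]
    rw [e1, e2, e3]
  set t'' : Fin d → ℝ := fun i => if β i = 0 then 0 else t i with ht''
  have ht''0 : ∀ i, 0 ≤ t'' i := by
    intro i; simp only [ht'']; split_ifs
    · exact le_refl _
    · exact ht0 i
  have hpt : ∀ i : Fin d, t i - psi (t'' i) ≤ Real.log (β i + 1) + (β i + 1)⁻¹ * t i := by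
    intro i
    by_cases hb : β i = 0
    · simp [ht'', hb, psi_zero]
    · simp only [ht'', if_neg hb]
      have := pointwise_bound (hβ0 i) (ht0 i)
      rw [add_comm 1 (β i)] at this
      rw [div_eq_inv_mul] at this
      exact this
  have hsupp'' : (Finset.univ.filter (fun i => t'' i ≠ 0)).card ≤ min q d := by
    refine le_trans (Finset.card_le_card ?_) hsupp
    intro i hi
    simp only [Finset.mem_filter, Finset.mem_univ, true_and] at hi ⊢
    intro hb
    exact hi (by simp [ht'', hb])
  have kyfan'' : ∀ I : Finset (Fin d), (∑ i ∈ I, t'' i) ≤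
      ∑ j ∈ Finset.univ.filter (fun j : Fin d => (j:ℕ) < I.card), lam j := by
    intro I
    have e1 : (∑ i ∈ I, t'' i) = ∑ i ∈ I.filter (fun i => ¬ β i = 0), t i := by
      rw [Finset.sum_filter]
      refine Finset.sum_congr rfl ?_
      intro i _
      simp only [ht'']
      by_cases h : β i = 0 <;> simp [h]
    rw [e1]
    refine le_trans (kyfan S U W lam hU hW hdecomp hmono hl0 _) ?_
    apply Finset.sum_le_sum_of_subset_of_nonneg
    · intro j hj
      simp only [Finset.mem_filter, Finset.mem_univ, true_and] at hj ⊢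
      exact lt_of_lt_of_le hj (Finset.card_filter_le I _)
    · intro j _ _; exact hl0 j
  have hmain := sum_psi_le lam t'' (min q d) (min_le_right q d) hl0 ht''0 hsupp'' kyfan''
  have hsum_le : (∑ i, (t i - psi (t'' i))) ≤
      ∑ i, (Real.log (β i + 1) + (β i + 1)⁻¹ * t i) :=
    Finset.sum_le_sum (fun i _ => hpt i)
  rw [Finset.sum_sub_distrib, Finset.sum_add_distrib, htsum] at hsum_le
  rw [hlogdet, htr]
  linarith

/-- value of the objective at the candidate maximizer -/
lemma value_eq {d q : ℕ} (S U : Matrix (Fin d) (Fin d) ℝ) (lam : Fin d → ℝ)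
    (hU : U * Uᵀ = 1) (hdecomp : S = U * diagonal lam * Uᵀ)
    (r : ℕ) (hge : ∀ j : Fin d, (j:ℕ) < r → 1 ≤ lam j)
    (A : Matrix (Fin d) (Fin q) ℝ)
    (hAA : A * Aᵀ = U * diagonal (fun j : Fin d => if (j:ℕ) < r then lam j - 1 else 0) * Uᵀ) :
    Real.log (A * Aᵀ + 1).det + ((A * Aᵀ + 1)⁻¹ * S).trace
      = (∑ j, lam j) - ∑ j ∈ Finset.univ.filter (fun j : Fin d => (j:ℕ) < r), psi (lam j) := by
  classical
  have hU' : Uᵀ * U = 1 := mul_eq_one_comm.mp hU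
  set ν : Fin d → ℝ := fun j => if (j:ℕ) < r then lam j else 1 with hν_def
  have hν1 : ∀ j, 0 < ν j := by
    intro j; simp only [hν_def]; split_ifs with h
    · linarith [hge j h]
    · norm_num
  have hνne : ∀ j, ν j ≠ 0 := fun j => ne_of_gt (hν1 j)
  have hM : A * Aᵀ + 1 = U * diagonal ν * Uᵀ := by
    have e : (fun i : Fin d => (if (i:ℕ) < r then lam i - 1 else 0) + 1) = ν := by
      funext i
      simp only [hν_def]
      split_ifs <;> ring
    rw [hAA, conj_add_one hU, e]
  have hlogdet : Real.log (A * Aᵀ + 1).det = ∑ j, Real.log (ν j) := by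
    rw [hM, conj_det hU, Matrix.det_diagonal,
      Real.log_prod (fun j _ => hνne j)]
  have hinv : (A * Aᵀ + 1)⁻¹ = U * diagonal (fun j => (ν j)⁻¹) * Uᵀ := by
    rw [hM, conj_inv hU hU' _ hνne]
  have htr : ((A * Aᵀ + 1)⁻¹ * S).trace = ∑ j, (ν j)⁻¹ * lam j := by
    rw [hinv, hdecomp, conj_mul hU', conj_trace hU', Matrix.diagonal_mul_diagonal,
      Matrix.trace_diagonal]
  rw [hlogdet, htr]
  have hfil : (∑ j ∈ Finset.univ.filter (fun j : Fin d => (j:ℕ) < r), psi (lam j))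
      = ∑ j : Fin d, (if (j:ℕ) < r then psi (lam j) else 0) := by
    rw [Finset.sum_filter]
  rw [hfil, ← Finset.sum_add_distrib, ← Finset.sum_sub_distrib]
  refine Finset.sum_congr rfl ?_
  intro j _
  by_cases h : (j:ℕ) < r
  · have h1 : 1 ≤ lam j := hge j h
    have h0 : lam j ≠ 0 := by linarith
    simp only [hν_def, if_pos h, psi, inv_mul_cancel₀ h0]
    rw [if_pos h1]
    ring
  · simp only [hν_def, if_neg h]
    rw [Real.log_one, inv_one, one_mul]
    ring

lemma sum_castLE {d q' : ℕ} (hq'd : q' ≤ d) (f : Fin d → ℝ) :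
    (∑ k : Fin q', f (Fin.castLE hq'd k))
      = ∑ a ∈ Finset.univ.filter (fun a : Fin d => (a:ℕ) < q'), f a := by
  refine Finset.sum_bij' (fun (k : Fin q') _ => Fin.castLE hq'd k)
    (fun a ha => (⟨(a:ℕ), by simpa using (Finset.mem_filter.mp ha).2⟩ : Fin q'))
    ?_ ?_ ?_ ?_ ?_
  · intro k _
    simp only [Finset.mem_filter, Finset.mem_univ, true_and]
    exact k.isLt
  · intro a _; simp
  · intro k _; simp [Fin.ext_iff]
  · intro a _; simp [Fin.ext_iff]
  · intro k _; rfl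

lemma AAt_eq {d q q' : ℕ} (hq'd : q' ≤ d) (U : Matrix (Fin d) (Fin d) ℝ)
    (lam : Fin d → ℝ)
    (hge : ∀ j : Fin d, (j:ℕ) < q' → 1 ≤ lam j)
    (V : Matrix (Fin q') (Fin q) ℝ) (hV : V * Vᵀ = 1)
    (A₀ : Matrix (Fin d) (Fin q) ℝ)
    (hA₀ : A₀ = Matrix.of fun i j =>
      ∑ k : Fin q', U i (Fin.castLE hq'd k) * Real.sqrt (lam (Fin.castLE hq'd k) - 1) * V k j) :
    A₀ * A₀ᵀ = U * diagonal (fun j : Fin d => if (j:ℕ) < q' then lam j - 1 else 0) * Uᵀ := by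
  classical
  have hVe : ∀ k k' : Fin q', (∑ c, V k c * V k' c) = if k = k' then 1 else 0 := by
    intro k k'
    have h := congrFun (congrFun hV k) k'
    rw [Matrix.mul_apply] at h
    simp only [Matrix.transpose_apply] at h
    rw [h, Matrix.one_apply]
  ext i j
  set a : Fin q' → ℝ := fun k => U i (Fin.castLE hq'd k) * Real.sqrt (lam (Fin.castLE hq'd k) - 1)
    with ha
  set b : Fin q' → ℝ := fun k => U j (Fin.castLE hq'd k) * Real.sqrt (lam (Fin.castLE hq'd k) - 1)
    with hb
  have lhs_eq : (A₀ * A₀ᵀ) i j = ∑ k : Fin q', a k * b k := by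
    rw [Matrix.mul_apply]
    have e0 : ∀ c : Fin q, A₀ i c * A₀ᵀ c j = (∑ k, a k * V k c) * (∑ k', b k' * V k' c) := by
      intro c
      rw [Matrix.transpose_apply, hA₀]
      simp only [Matrix.of_apply, ha, hb]
    rw [Finset.sum_congr rfl (fun c _ => e0 c)]
    have e1 : ∀ c : Fin q, (∑ k, a k * V k c) * (∑ k', b k' * V k' c)
        = ∑ k, ∑ k', (a k * V k c) * (b k' * V k' c) := by
      intro c; rw [Finset.sum_mul_sum]
    rw [Finset.sum_congr rfl (fun c _ => e1 c)]
    rw [Finset.sum_comm]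
    have e2 : ∀ k : Fin q', (∑ c : Fin q, ∑ k', (a k * V k c) * (b k' * V k' c))
        = ∑ k', a k * b k' * ∑ c, V k c * V k' c := by
      intro k
      rw [Finset.sum_comm]
      refine Finset.sum_congr rfl ?_
      intro k' _
      rw [Finset.mul_sum]
      refine Finset.sum_congr rfl ?_
      intro c _; ring
    rw [Finset.sum_congr rfl (fun k _ => e2 k)]
    refine Finset.sum_congr rfl ?_
    intro k _
    rw [Finset.sum_congr rfl (fun k' _ => by rw [hVe k k'])]
    simp
  have hab : ∀ k : Fin q', a k * b k
      = U i (Fin.castLE hq'd k) * ((lam (Fin.castLE hq'd k) - 1) * U j (Fin.castLE hq'd k)) := by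
    intro k
    have h1 : 1 ≤ lam (Fin.castLE hq'd k) := hge _ (by simpa using k.isLt)
    have h2 : Real.sqrt (lam (Fin.castLE hq'd k) - 1) * Real.sqrt (lam (Fin.castLE hq'd k) - 1)
        = lam (Fin.castLE hq'd k) - 1 := Real.mul_self_sqrt (by linarith)
    simp only [ha, hb]
    calc U i (Fin.castLE hq'd k) * Real.sqrt (lam (Fin.castLE hq'd k) - 1) *
          (U j (Fin.castLE hq'd k) * Real.sqrt (lam (Fin.castLE hq'd k) - 1))
        = U i (Fin.castLE hq'd k) * U j (Fin.castLE hq'd k) *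
          (Real.sqrt (lam (Fin.castLE hq'd k) - 1) * Real.sqrt (lam (Fin.castLE hq'd k) - 1)) := by
          ring
      _ = U i (Fin.castLE hq'd k) * ((lam (Fin.castLE hq'd k) - 1) * U j (Fin.castLE hq'd k)) := by
          rw [h2]; ring
  have rhs_eq : (U * diagonal (fun j : Fin d => if (j:ℕ) < q' then lam j - 1 else 0) * Uᵀ) i j
      = ∑ k : Fin q', a k * b k := by
    rw [Matrix.mul_assoc, Matrix.mul_apply]
    have e3 : ∀ c : Fin d,
        (U i c * ((diagonal (fun j : Fin d => if (j:ℕ) < q' then lam j - 1 else 0)) * Uᵀ) c j)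
        = if (c:ℕ) < q' then U i c * ((lam c - 1) * U j c) else 0 := by
      intro c
      rw [Matrix.diagonal_mul, Matrix.transpose_apply]
      split_ifs <;> simp
    rw [Finset.sum_congr rfl (fun c _ => e3 c)]
    rw [← Finset.sum_filter]
    rw [← sum_castLE hq'd (fun c => U i c * ((lam c - 1) * U j c))]
    exact (Finset.sum_congr rfl (fun k _ => (hab k).symm))
  rw [lhs_eq, rhs_eq]

lemma psi_sum_eq {d q q' : ℕ} (lam : Fin d → ℝ) (hq'q : q' ≤ q) (hq'd : q' ≤ d)
    (hle : ∀ j : Fin d, q' ≤ (j : ℕ) → (j : ℕ) < q → lam j ≤ 1) :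
    (∑ j ∈ Finset.univ.filter (fun j : Fin d => (j:ℕ) < q'), psi (lam j))
      = ∑ j ∈ Finset.univ.filter (fun j : Fin d => (j:ℕ) < min q d), psi (lam j) := by
  apply Finset.sum_subset
  · intro j hj
    simp only [Finset.mem_filter, Finset.mem_univ, true_and] at hj ⊢
    omega
  · intro j hj hj'
    simp only [Finset.mem_filter, Finset.mem_univ, true_and] at hj hj'
    exact psi_of_le_one (hle j (by omega) (by omega))
end TBFA

/-- closed-form maximizer of
`f(A) = −(ln|AA'+I| + tr((AA'+I)⁻¹ S))` over `A ∈ ℝ^{d×q}`: with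
`S = U diag(λ) Uᵀ`, `λ` decreasing, the maximum is attained at
`A₀ = U_{q'} (Λ_{q'} − I)^{1/2} V` where `q'` is the largest index with `λ_{q'} ≥ 1`
(capped at `q`) and `V V' = I`; in particular if `λ_q ≥ 1` then
`A₁ = U_q (Λ_q − I)^{1/2}` is a maximizer. -/
theorem loading_cm_step_maximizer {d q q' : ℕ}
    (S U : Matrix (Fin d) (Fin d) ℝ) (lam : Fin d → ℝ)
    (hS : S.PosSemidef) (hU : U * Uᵀ = 1)
    (hdecomp : S = U * Matrix.diagonal lam * Uᵀ)
    (hmono : ∀ i j : Fin d, i ≤ j → lam j ≤ lam i)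
    (hq'q : q' ≤ q) (hq'd : q' ≤ d)
    (hge : ∀ j : Fin d, (j : ℕ) < q' → 1 ≤ lam j)
    (hle : ∀ j : Fin d, q' ≤ (j : ℕ) → (j : ℕ) < q → lam j ≤ 1)
    (V : Matrix (Fin q') (Fin q) ℝ) (hV : V * Vᵀ = 1)
    (A₀ : Matrix (Fin d) (Fin q) ℝ)
    (hA₀ : A₀ = Matrix.of fun i j =>
      ∑ k : Fin q', U i (Fin.castLE hq'd k) * Real.sqrt (lam (Fin.castLE hq'd k) - 1) * V k j) :
    (∀ A : Matrix (Fin d) (Fin q) ℝ,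
        -(Real.log (A * Aᵀ + 1).det + ((A * Aᵀ + 1)⁻¹ * S).trace) ≤
        -(Real.log (A₀ * A₀ᵀ + 1).det + ((A₀ * A₀ᵀ + 1)⁻¹ * S).trace)) ∧
    (∀ (hqd : q ≤ d), (∀ j : Fin d, (j : ℕ) < q → 1 ≤ lam j) →
      ∀ A₁ : Matrix (Fin d) (Fin q) ℝ,
        A₁ = (Matrix.of fun i j =>
          U i (Fin.castLE hqd j) * Real.sqrt (lam (Fin.castLE hqd j) - 1)) →
        ∀ A : Matrix (Fin d) (Fin q) ℝ,
          -(Real.log (A * Aᵀ + 1).det + ((A * Aᵀ + 1)⁻¹ * S).trace) ≤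
          -(Real.log (A₁ * A₁ᵀ + 1).det + ((A₁ * A₁ᵀ + 1)⁻¹ * S).trace)) := by
  constructor
  · intro A
    have hAA := TBFA.AAt_eq hq'd U lam hge V hV A₀ hA₀
    have hval := TBFA.value_eq S U lam hU hdecomp q' hge A₀ hAA
    have hlb := TBFA.lower_bound S U lam hS hU hdecomp hmono A
    have heq := TBFA.psi_sum_eq lam hq'q hq'd hle
    rw [hval]
    linarith
  · intro hqd hge2 A₁ hA₁ A
    have hA₁' : A₁ = Matrix.of fun i j =>
        ∑ k : Fin q, U i (Fin.castLE hqd k) * Real.sqrt (lam (Fin.castLE hqd k) - 1)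
          * (1 : Matrix (Fin q) (Fin q) ℝ) k j := by
      rw [hA₁]
      ext i j
      simp only [Matrix.of_apply, Matrix.one_apply, mul_ite, mul_one, mul_zero]
      rw [Finset.sum_ite_eq' Finset.univ j
        (fun k => U i (Fin.castLE hqd k) * Real.sqrt (lam (Fin.castLE hqd k) - 1))]
      simp
    have hV1 : (1 : Matrix (Fin q) (Fin q) ℝ) * (1 : Matrix (Fin q) (Fin q) ℝ)ᵀ = 1 := by
      rw [Matrix.transpose_one, Matrix.one_mul]
    have hAA := TBFA.AAt_eq hqd U lam hge2 (1 : Matrix (Fin q) (Fin q) ℝ) hV1 A₁ hA₁'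
    have hval := TBFA.value_eq S U lam hU hdecomp q hge2 A₁ hAA
    have hlb := TBFA.lower_bound S U lam hS hU hdecomp hmono A
    have heq : (∑ j ∈ Finset.univ.filter (fun j : Fin d => (j:ℕ) < q), TBFA.psi (lam j))
        = ∑ j ∈ Finset.univ.filter (fun j : Fin d => (j:ℕ) < min q d), TBFA.psi (lam j) := by
      have : min q d = q := min_eq_left hqd
      rw [this]
    rw [hval]
    linarith

end
end
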